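/- arXiv:1402.2970 — 10 statements merged into one kernel-verified Lean document; each statement's English description precedes it below -/
import Mathlib

section
/- In the project salary model of the centralized coalition formation game, if there exists at least one feasible coalition, then there exists a Strong Nash Equilibrium of the bidding game; moreover, in every Strong Nash Equilibrium the set of agents receiving positive payoffs equals the set of agents forming the cheapest feasible coalition. -/
open Classical Finset

lemma exists_rel_min {β : Type*} [DecidableEq β] (r : β → β → Prop)
    (htotal : ∀ a b, a ≠ b → r a b ∨ r b a)
    (htrans : ∀ a b c, r a b → r b c → r a c) :
    ∀ s : Finset β, s.Nonempty → ∃ a ∈ s, ∀ b ∈ s, b ≠ a → r a b := by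
  intro s
  induction s using Finset.induction_on with
  | empty => intro h; exact absurd h (by simp)
  | @insert a s ha ih =>
    intro _
    by_cases hs : s.Nonempty
    · obtain ⟨b, hb, hmin⟩ := ih hs
      have hab : a ≠ b := fun h => ha (h ▸ hb)
      rcases htotal a b hab with h | h
      · refine ⟨a, Finset.mem_insert_self _ _, ?_⟩
        intro c hc hca
        rcases Finset.mem_insert.mp hc with rfl | hcs
        · exact absurd rfl hca
        · by_cases hcb : c = b
          · exact hcb ▸ h
          · exact htrans a b c h (hmin c hcs hcb)
      · refine ⟨b, Finset.mem_insert_of_mem hb, ?_⟩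
        intro c hc hcb
        rcases Finset.mem_insert.mp hc with rfl | hcs
        · exact h
        · exact hmin c hcs hcb
    · rw [Finset.not_nonempty_iff_eq_empty.mp hs]
      refine ⟨a, Finset.mem_insert_self _ _, ?_⟩
      intro c hc hca
      rcases Finset.mem_insert.mp hc with rfl | hcs
      · exact absurd rfl hca
      · exact absurd hcs (Finset.notMem_empty c)

/-- Centralized coalition formation game, project salary model: if a feasible coalition
exists then a Strong Nash Equilibrium exists, and in every SNE the agents with positive
payoffs are exactly the members of the cheapest feasible coalition (the winner under the
minimal-salary profile). -/
theorem stmt0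
    {α : Type} [Fintype α] [DecidableEq α]
    (m : α → ℕ) (hm : ∀ i, 0 < m i) (v : ℕ)
    (F : Finset α → Prop)
    (prec : Finset α → Finset α → Prop)
    (hprec : IsStrictTotalOrder (Finset α) prec)
    (winner : (α → ℕ) → Finset α → Prop)
    (hwinner : ∀ s W, winner s W ↔
      (F W ∧ ∑ i ∈ W, s i ≤ v) ∧
      ∀ A, A ≠ W → F A → ∑ i ∈ A, s i ≤ v →
        (∑ i ∈ W, s i < ∑ i ∈ A, s i ∨
         (∑ i ∈ W, s i = ∑ i ∈ A, s i ∧ prec W A)))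
    (payoff : (α → ℕ) → α → ℕ)
    (hpayoff : ∀ s i, payoff s i = if ∃ W, winner s W ∧ i ∈ W then s i else 0)
    (valid : (α → ℕ) → Prop)
    (hvalid : ∀ s, valid s ↔ ∀ i, m i ≤ s i)
    (SNE : (α → ℕ) → Prop)
    (hSNE : ∀ s, SNE s ↔ valid s ∧ ¬ ∃ (D : Finset α) (s' : α → ℕ),
      D.Nonempty ∧ valid s' ∧ (∀ i ∉ D, s' i = s i) ∧
      ∀ i ∈ D, payoff s i < payoff s' i)
    (hfeas : ∃ S : Finset α, F S ∧ ∑ i ∈ S, m i ≤ v) :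
    (∃ s, SNE s) ∧
    ∀ s, SNE s → ∀ W, winner m W → ∀ i, (0 < payoff s i ↔ i ∈ W) := by
  classical
  -- winner existence
  have hwex : ∀ s : α → ℕ, (∃ A : Finset α, F A ∧ ∑ i ∈ A, s i ≤ v) → ∃ W, winner s W := by
    intro s ⟨A0, hA0F, hA0v⟩
    set R : Finset α → Finset α → Prop := fun A B =>
      ∑ i ∈ A, s i < ∑ i ∈ B, s i ∨ (∑ i ∈ A, s i = ∑ i ∈ B, s i ∧ prec A B) with hR
    have htotal : ∀ A B, A ≠ B → R A B ∨ R B A := by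
      intro A B hAB
      rcases lt_trichotomy (∑ i ∈ A, s i) (∑ i ∈ B, s i) with h | h | h
      · exact Or.inl (Or.inl h)
      · rcases (by haveI := hprec; exact trichotomous (r := prec) A B : prec A B ∨ A = B ∨ prec B A) with hp | rfl | hp
        · exact Or.inl (Or.inr ⟨h, hp⟩)
        · exact absurd rfl hAB
        · exact Or.inr (Or.inr ⟨h.symm, hp⟩)
      · exact Or.inr (Or.inl h)
    have htrans : ∀ A B C, R A B → R B C → R A C := by
      intro A B C h1 h2
      rcases h1 with h1 | ⟨h1, hp1⟩ <;> rcases h2 with h2 | ⟨h2, hp2⟩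
      · exact Or.inl (h1.trans h2)
      · exact Or.inl (h2 ▸ h1)
      · exact Or.inl (h1 ▸ h2)
      · exact Or.inr ⟨h1.trans h2, hprec.trans _ _ _ hp1 hp2⟩
    set C : Finset (Finset α) := Finset.univ.filter (fun B => F B ∧ ∑ i ∈ B, s i ≤ v) with hC
    have hCne : C.Nonempty := ⟨A0, Finset.mem_filter.mpr ⟨Finset.mem_univ _, hA0F, hA0v⟩⟩
    obtain ⟨W, hWC, hWmin⟩ := exists_rel_min R htotal htrans C hCne
    have hWmem := (Finset.mem_filter.mp hWC).2
    refine ⟨W, (hwinner s W).mpr ⟨hWmem, ?_⟩⟩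
    intro A hA hFA hAv
    exact hWmin A (Finset.mem_filter.mpr ⟨Finset.mem_univ _, hFA, hAv⟩) hA
  -- winner uniqueness
  have huniq : ∀ (s : α → ℕ) (W W' : Finset α), winner s W → winner s W' → W = W' := by
    intro s W W' hW hW'
    by_contra hne
    have h1 := ((hwinner s W).mp hW).2 W' (Ne.symm hne) ((hwinner s W').mp hW').1.1
      ((hwinner s W').mp hW').1.2
    have h2 := ((hwinner s W').mp hW').2 W hne ((hwinner s W).mp hW).1.1
      ((hwinner s W).mp hW).1.2
    rcases h1 with h1 | ⟨he1, hp1⟩ <;> rcases h2 with h2 | ⟨he2, hp2⟩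
    · omega
    · omega
    · omega
    · exact (hprec.irrefl W) (hprec.trans _ _ _ hp1 hp2)
  obtain ⟨W₀, hW₀⟩ := hwex m hfeas
  have hW₀spec := (hwinner m W₀).mp hW₀
  have hFW₀ : F W₀ := hW₀spec.1.1
  have hmW₀v : ∑ i ∈ W₀, m i ≤ v := hW₀spec.1.2
  -- lift lemma: raising salaries off the winner keeps it winning
  have hlift : ∀ (t u : α → ℕ) (W' : Finset α), winner t W' → (∀ i, t i ≤ u i) →
      (∀ i ∈ W', u i = t i) → winner u W' := by
    intro t u W' hw hle heq
    have hsum : ∀ A : Finset α, ∑ i ∈ A, t i ≤ ∑ i ∈ A, u i :=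
      fun A => Finset.sum_le_sum (fun i _ => hle i)
    have hWeq : ∑ i ∈ W', u i = ∑ i ∈ W', t i := Finset.sum_congr rfl (fun i hi => heq i hi)
    rw [hwinner] at hw ⊢
    refine ⟨⟨hw.1.1, by rw [hWeq]; exact hw.1.2⟩, ?_⟩
    intro A hA hFA hAv
    have h1 : ∑ i ∈ A, t i ≤ v := le_trans (hsum A) hAv
    rcases hw.2 A hA hFA h1 with h | ⟨he, hp⟩
    · left; rw [hWeq]; exact lt_of_lt_of_le h (hsum A)
    · rcases lt_or_eq_of_le (hsum A) with h2 | h2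
      · left; rw [hWeq, he]; exact h2
      · right; exact ⟨by rw [hWeq, he, h2], hp⟩
  -- key lemma: a valid profile whose winner is not W₀ admits a profitable deviation
  have hkey : ∀ s : α → ℕ, (∀ i, m i ≤ s i) → ¬ winner s W₀ →
      ∃ (D : Finset α) (s' : α → ℕ), D.Nonempty ∧ valid s' ∧ (∀ i ∉ D, s' i = s i) ∧
        ∀ i ∈ D, payoff s i < payoff s' i := by
    intro s hs hns
    by_cases hex : ∃ Ws, winner s Ws
    · obtain ⟨Ws, hWs⟩ := hex
      have hWsspec := (hwinner s Ws).mp hWs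
      have hWsW₀ : Ws ≠ W₀ := fun h => hns (h ▸ hWs)
      have hmWs_v : ∑ i ∈ Ws, m i ≤ v :=
        le_trans (Finset.sum_le_sum fun i _ => hs i) hWsspec.1.2
      have hcmp := hW₀spec.2 Ws hWsW₀ hWsspec.1.1 hmWs_v
      have hmle : ∑ i ∈ W₀, m i ≤ ∑ i ∈ Ws, m i := by rcases hcmp with h | ⟨h, _⟩ <;> omega
      set t : α → ℕ := fun i => if i ∈ Ws then s i else m i with ht
      have hmt : ∀ i, m i ≤ t i := by
        intro i; by_cases h : i ∈ Ws <;> simp [ht, h, hs i]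
      have htWs : ∑ i ∈ Ws, t i = ∑ i ∈ Ws, s i :=
        Finset.sum_congr rfl (fun i hi => by simp [ht, hi])
      have hdm1 := Finset.sum_inter_add_sum_sdiff W₀ Ws m
      have hdm2 := Finset.sum_inter_add_sum_sdiff Ws W₀ m
      have hds2 := Finset.sum_inter_add_sum_sdiff Ws W₀ s
      have hic : Ws ∩ W₀ = W₀ ∩ Ws := Finset.inter_comm _ _
      rw [hic] at hdm2 hds2
      have htW₀ : ∑ i ∈ W₀, t i = ∑ i ∈ W₀ ∩ Ws, s i + ∑ i ∈ W₀ \ Ws, m i := by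
        rw [← Finset.sum_inter_add_sum_sdiff W₀ Ws t]
        congr 1
        · exact Finset.sum_congr rfl (fun i hi => by simp [ht, (Finset.mem_inter.mp hi).2])
        · exact Finset.sum_congr rfl (fun i hi => by simp [ht, (Finset.mem_sdiff.mp hi).2])
      have hd1 : ∑ i ∈ W₀ \ Ws, m i ≤ ∑ i ∈ Ws \ W₀, m i := by omega
      have hd2 : ∑ i ∈ Ws \ W₀, m i ≤ ∑ i ∈ Ws \ W₀, s i :=
        Finset.sum_le_sum (fun i _ => hs i)
      have htW₀v' : ∑ i ∈ W₀, t i ≤ ∑ i ∈ Ws, s i := by omega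
      have htv : ∑ i ∈ W₀, t i ≤ v := le_trans htW₀v' hWsspec.1.2
      obtain ⟨W', hW'⟩ := hwex t ⟨W₀, hFW₀, htv⟩
      have hW'spec := (hwinner t W').mp hW'
      have hW'Ws : W' ≠ Ws := by
        rintro rfl
        have hcm := hW'spec.2 W₀ (Ne.symm hWsW₀) hFW₀ htv
        rw [htWs] at hcm
        rcases hcm with hlt | ⟨heq, hp⟩
        · omega
        · have h1 : ∑ i ∈ W₀, m i = ∑ i ∈ W', m i := by omega
          rcases hcmp with h | ⟨_, hp'⟩
          · omega
          · exact (hprec.irrefl W₀) (hprec.trans _ _ _ hp' hp)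
      have hnsub : ¬ W' ⊆ Ws := by
        intro hsub
        have htW' : ∑ i ∈ W', t i = ∑ i ∈ W', s i :=
          Finset.sum_congr rfl (fun i hi => by simp [ht, hsub hi])
        have hle1 : ∑ i ∈ W', s i ≤ ∑ i ∈ Ws, s i :=
          Finset.sum_le_sum_of_subset hsub
        have hvW' : ∑ i ∈ W', s i ≤ v := le_trans hle1 hWsspec.1.2
        have hcm := hWsspec.2 W' hW'Ws hW'spec.1.1 hvW'
        rcases hcm with hlt | ⟨heq, hp⟩
        · omega
        · obtain ⟨j, hjWs, hjW'⟩ : ∃ j ∈ Ws, j ∉ W' := by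
            by_contra hc
            push_neg at hc
            exact hW'Ws (Finset.Subset.antisymm hsub (fun x hx => hc x hx))
          have hdec := Finset.sum_inter_add_sum_sdiff Ws W' s
          have h2 : Ws ∩ W' = W' := Finset.inter_eq_right.mpr hsub
          rw [h2] at hdec
          have hz : ∑ i ∈ Ws \ W', s i = 0 := by omega
          have hjp : 0 < s j := lt_of_lt_of_le (hm j) (hs j)
          have hjle : s j ≤ ∑ i ∈ Ws \ W', s i :=
            Finset.single_le_sum (fun i _ => Nat.zero_le _)
              (Finset.mem_sdiff.mpr ⟨hjWs, hjW'⟩)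
          omega
      obtain ⟨j0, hj0W', hj0Ws⟩ := Finset.not_subset.mp hnsub
      set D : Finset α := W' \ Ws with hD
      set u : α → ℕ := fun i => if i ∈ D then m i else s i with hu
      have hmu : ∀ i, m i ≤ u i := by
        intro i; by_cases h : i ∈ D <;> simp [hu, h, hs i]
      have hut : ∀ i, t i ≤ u i := by
        intro i
        by_cases hiWs : i ∈ Ws
        · have hiD : i ∉ D := fun h => (Finset.mem_sdiff.mp h).2 hiWs
          simp [hu, ht, hiWs, hiD]
        · simp only [ht, if_neg hiWs]; exact hmu i
      have huW' : ∀ i ∈ W', u i = t i := by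
        intro i hi
        by_cases hiWs : i ∈ Ws
        · have hiD : i ∉ D := fun h => (Finset.mem_sdiff.mp h).2 hiWs
          simp [hu, ht, hiWs, hiD]
        · have hiD : i ∈ D := Finset.mem_sdiff.mpr ⟨hi, hiWs⟩
          simp [hu, ht, hiWs, hiD]
      have hwu : winner u W' := hlift t u W' hW' hut huW'
      refine ⟨D, u, ⟨j0, Finset.mem_sdiff.mpr ⟨hj0W', hj0Ws⟩⟩, (hvalid u).mpr hmu, ?_, ?_⟩
      · intro i hi; simp [hu, hi]
      · intro i hiD
        have hiW' : i ∈ W' := (Finset.mem_sdiff.mp hiD).1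
        have hiWs : i ∉ Ws := (Finset.mem_sdiff.mp hiD).2
        have h0 : payoff s i = 0 := by
          rw [hpayoff, if_neg]
          rintro ⟨W'', hw'', hiw''⟩
          rw [huniq s W'' Ws hw'' hWs] at hiw''
          exact hiWs hiw''
        rw [h0, hpayoff, if_pos ⟨W', hwu, hiW'⟩]
        simp only [hu, if_pos hiD]
        exact hm i
    · -- no winner under s
      have hpay0 : ∀ i, payoff s i = 0 := by
        intro i; rw [hpayoff, if_neg]
        rintro ⟨W'', hw'', _⟩
        exact hex ⟨W'', hw''⟩
      have hW₀ne : W₀.Nonempty := by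
        rcases Finset.eq_empty_or_nonempty W₀ with h | h
        · exact absurd (hwex s ⟨∅, h ▸ hFW₀, by simp⟩) hex
        · exact h
      set u : α → ℕ := fun i => if i ∈ W₀ then m i else s i with hu
      have hmu : ∀ i, m i ≤ u i := by
        intro i; by_cases h : i ∈ W₀ <;> simp [hu, h, hs i]
      have hwu : winner u W₀ :=
        hlift m u W₀ hW₀ (by intro i; by_cases h : i ∈ W₀ <;> simp [hu, h, hs i])
          (by intro i hi; simp [hu, hi])
      refine ⟨W₀, u, hW₀ne, (hvalid u).mpr hmu, ?_, ?_⟩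
      · intro i hi; simp [hu, hi]
      · intro i hi
        rw [hpay0 i, hpayoff, if_pos ⟨W₀, hwu, hi⟩]
        simp only [hu, if_pos hi]
        exact hm i
  -- existence of an SNE: maximize total salary of W₀ subject to winning, m elsewhere
  have hexist : ∃ s, SNE s := by
    set P : (α → ℕ) → Prop := fun s =>
      (∀ i, m i ≤ s i) ∧ (∀ i, i ∉ W₀ → s i = m i) ∧ winner s W₀ with hP
    set T : Finset ℕ := (Finset.range (v+1)).filter
      (fun n => ∃ s, P s ∧ ∑ i ∈ W₀, s i = n) with hT
    have hTne : T.Nonempty := by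
      refine ⟨∑ i ∈ W₀, m i, Finset.mem_filter.mpr ⟨Finset.mem_range.mpr (by omega), ?_⟩⟩
      exact ⟨m, ⟨fun i => le_refl _, fun i _ => rfl, hW₀⟩, rfl⟩
    obtain ⟨s₀, hPs₀, hs₀N⟩ : ∃ s, P s ∧ ∑ i ∈ W₀, s i = T.max' hTne :=
      (Finset.mem_filter.mp (T.max'_mem hTne)).2
    refine ⟨s₀, (hSNE s₀).mpr ⟨(hvalid s₀).mpr hPs₀.1, ?_⟩⟩
    rintro ⟨D, s', hDne, hval', heqout, hgain⟩
    have hval'' := (hvalid s').mp hval'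
    obtain ⟨i₀, hi₀⟩ := hDne
    have hpos : 0 < payoff s' i₀ := lt_of_le_of_lt (Nat.zero_le _) (hgain i₀ hi₀)
    obtain ⟨W', hwW', _⟩ : ∃ W, winner s' W ∧ i₀ ∈ W := by
      by_contra hc
      rw [hpayoff, if_neg hc] at hpos
      omega
    have hDW' : ∀ i ∈ D, i ∈ W' := by
      intro i hi
      have h0 : 0 < payoff s' i := lt_of_le_of_lt (Nat.zero_le _) (hgain i hi)
      rw [hpayoff] at h0
      by_cases hc : ∃ W, winner s' W ∧ i ∈ W
      · obtain ⟨W'', hw'', hi''⟩ := hc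
        rwa [huniq s' W'' W' hw'' hwW'] at hi''
      · rw [if_neg hc] at h0; omega
    have hpay' : ∀ i ∈ D, payoff s' i = s' i := fun i hi => by
      rw [hpayoff, if_pos ⟨W', hwW', hDW' i hi⟩]
    have hpay₀ : ∀ i, payoff s₀ i = if i ∈ W₀ then s₀ i else 0 := by
      intro i
      rw [hpayoff]
      by_cases hiW₀ : i ∈ W₀
      · rw [if_pos ⟨W₀, hPs₀.2.2, hiW₀⟩, if_pos hiW₀]
      · rw [if_neg, if_neg hiW₀]
        rintro ⟨W'', hw'', hi''⟩
        rw [huniq s₀ W'' W₀ hw'' hPs₀.2.2] at hi''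
        exact hiW₀ hi''
    have hge : ∀ i, s₀ i ≤ s' i := by
      intro i
      by_cases hiD : i ∈ D
      · have hg := hgain i hiD
        rw [hpay' i hiD, hpay₀ i] at hg
        by_cases hiW₀ : i ∈ W₀
        · rw [if_pos hiW₀] at hg; omega
        · rw [hPs₀.2.1 i hiW₀]; exact hval'' i
      · exact le_of_eq (heqout i hiD).symm
    have hstrict : ∀ i ∈ D, i ∈ W₀ → s₀ i < s' i := by
      intro i hiD hiW₀
      have hg := hgain i hiD
      rwa [hpay' i hiD, hpay₀ i, if_pos hiW₀] at hg
    have hW'spec' := (hwinner s' W').mp hwW'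
    by_cases hW'W₀ : W' = W₀
    · subst hW'W₀
      have hPs' : P s' := by
        refine ⟨hval'', fun i hi => ?_, hwW'⟩
        rw [heqout i (fun hiD => hi (hDW' i hiD)), hPs₀.2.1 i hi]
      have hmem : ∑ i ∈ W', s' i ∈ T := by
        refine Finset.mem_filter.mpr ⟨Finset.mem_range.mpr ?_, ⟨s', hPs', rfl⟩⟩
        have := hW'spec'.1.2; omega
      have hlt : ∑ i ∈ W', s₀ i < ∑ i ∈ W', s' i :=
        Finset.sum_lt_sum (fun i _ => hge i) ⟨i₀, hDW' i₀ hi₀, hstrict i₀ hi₀ (hDW' i₀ hi₀)⟩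
      have hmax := Finset.le_max' T _ hmem
      omega
    · set δ : α → ℕ := fun i => s' i - s₀ i with hδ
      have hδ0 : ∀ i, i ∉ D → δ i = 0 := fun i hi => by simp [hδ, heqout i hi]
      have hsum' : ∀ A : Finset α, ∑ i ∈ A, s' i = ∑ i ∈ A, s₀ i + ∑ i ∈ A, δ i := by
        intro A
        rw [← Finset.sum_add_distrib]
        exact Finset.sum_congr rfl (fun i _ => by have := hge i; simp [hδ]; omega)
      have hδle : ∑ i ∈ W₀, δ i ≤ ∑ i ∈ W', δ i := by
        have hdec := Finset.sum_inter_add_sum_sdiff W₀ W' δ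
        have hz : ∑ i ∈ W₀ \ W', δ i = 0 :=
          Finset.sum_eq_zero (fun i hi =>
            hδ0 i (fun hiD => (Finset.mem_sdiff.mp hi).2 (hDW' i hiD)))
        have hsub : ∑ i ∈ W₀ ∩ W', δ i ≤ ∑ i ∈ W', δ i :=
          Finset.sum_le_sum_of_subset (Finset.inter_subset_right)
        omega
      have hs'W' : ∑ i ∈ W', s' i ≤ v := hW'spec'.1.2
      have hA := hsum' W'
      have hB := hsum' W₀
      have hs₀W'v : ∑ i ∈ W', s₀ i ≤ v := by omega
      have hcmp₀ := ((hwinner s₀ W₀).mp hPs₀.2.2).2 W' hW'W₀ hW'spec'.1.1 hs₀W'v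
      have hle₀ : ∑ i ∈ W₀, s₀ i ≤ ∑ i ∈ W', s₀ i := by
        rcases hcmp₀ with h | ⟨h, _⟩ <;> omega
      have hs'W₀v : ∑ i ∈ W₀, s' i ≤ v := by omega
      have hcmp' := hW'spec'.2 W₀ (fun h => hW'W₀ h.symm) hFW₀ hs'W₀v
      rcases hcmp' with hlt | ⟨heq', hp'⟩
      · omega
      · have h1 : ∑ i ∈ W₀, s₀ i = ∑ i ∈ W', s₀ i := by omega
        rcases hcmp₀ with h | ⟨_, hp₀⟩
        · omega
        · exact (hprec.irrefl W₀) (hprec.trans _ _ _ hp₀ hp')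
  refine ⟨hexist, ?_⟩
  intro s hs W hW i
  have hWW₀ : W = W₀ := huniq m W W₀ hW hW₀
  subst hWW₀
  rw [hSNE] at hs
  have hvs := (hvalid s).mp hs.1
  have hwin : winner s W := by
    by_contra hc
    exact hs.2 (hkey s hvs hc)
  constructor
  · intro hpos
    by_contra hiW
    rw [hpayoff] at hpos
    by_cases hc : ∃ W', winner s W' ∧ i ∈ W'
    · obtain ⟨W'', hw'', hi''⟩ := hc
      rw [huniq s W'' W hw'' hwin] at hi''
      exact hiW hi''
    · rw [if_neg hc] at hpos; omega
  · intro hiW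
    rw [hpayoff, if_pos ⟨W, hwin, hiW⟩]
    exact lt_of_lt_of_le (hm i) (hvs i)
end

section
/- In the hourly salary model of the centralized coalition formation game, a Strong Nash Equilibrium may fail to exist even though a feasible coalition exists. Concretely: with budget v = 49, three agents a, b, c with minimal hourly salaries all equal to 1, where the feasible two-agent coalitions require working times (t_a, t_b) = (10, 10), (t_a, t_c) = (22, 2), and (t_b, t_c) = (2, 38), the resulting bidding game (agent payoff = hourly salary if in the cheapest feasible coalition, coalition cost = ∑ t_i · s_i, cost must not exceed v) has no Strong Nash Equilibrium. -/
open Classical Finset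

/-- Hourly salary model, centralized game: in the concrete 3-agent instance with budget 49,
minimal hourly salaries 1, and two-agent coalitions with working times (10,10), (22,2), (2,38),
a feasible coalition exists but no Strong Nash Equilibrium exists (for any deterministic
tie-breaking rule). Agents: a = 0, b = 1, c = 2; coalition indexed by its non-member. -/
theorem stmt1
    (tie : Fin 3 → Fin 3 → Prop) (htie : IsStrictTotalOrder (Fin 3) tie)
    (cost : Fin 3 → (Fin 3 → ℕ) → ℕ)
    (hcost : ∀ s : Fin 3 → ℕ,
      cost 2 s = 10 * s 0 + 10 * s 1 ∧
      cost 1 s = 22 * s 0 + 2 * s 2 ∧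
      cost 0 s = 2 * s 1 + 38 * s 2)
    (wins : (Fin 3 → ℕ) → Fin 3 → Prop)
    (hwins : ∀ s k, wins s k ↔ cost k s ≤ 49 ∧ ∀ k', k' ≠ k → cost k' s ≤ 49 →
      (cost k s < cost k' s ∨ (cost k s = cost k' s ∧ tie k k')))
    (payoff : (Fin 3 → ℕ) → Fin 3 → ℕ)
    (hpayoff : ∀ s i, payoff s i =
      if ∃ k, wins s k ∧ i ∈ Finset.univ.erase k then s i else 0)
    (valid : (Fin 3 → ℕ) → Prop)
    (hvalid : ∀ s, valid s ↔ ∀ i, 1 ≤ s i)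
    (SNE : (Fin 3 → ℕ) → Prop)
    (hSNE : ∀ s, SNE s ↔ valid s ∧ ¬ ∃ (D : Finset (Fin 3)) (s' : Fin 3 → ℕ),
      D.Nonempty ∧ valid s' ∧ (∀ i ∉ D, s' i = s i) ∧
      ∀ i ∈ D, payoff s i < payoff s' i) :
    (∃ (s : Fin 3 → ℕ) (k : Fin 3), valid s ∧ cost k s ≤ 49) ∧ ¬ ∃ s, SNE s := by
  constructor
  · refine ⟨fun _ => 1, 2, (hvalid _).2 fun i => le_rfl, ?_⟩
    rw [(hcost _).1]; norm_num
  rintro ⟨s, hs⟩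
  rw [hSNE s] at hs
  obtain ⟨hval, hno⟩ := hs
  rw [hvalid] at hval
  have hs0 := hval 0; have hs1 := hval 1; have hs2 := hval 2
  obtain ⟨h2, h1, h0⟩ := hcost s
  have fin3 : ∀ k : Fin 3, k = 0 ∨ k = 1 ∨ k = 2 := by decide
  have huniq : ∀ (t : Fin 3 → ℕ) k k', wins t k → wins t k' → k = k' := by
    intro t k k' hk hk'
    by_contra hne
    obtain ⟨hf, hl⟩ := (hwins t k).1 hk
    obtain ⟨hf', hl'⟩ := (hwins t k').1 hk'
    rcases hl k' (Ne.symm hne) hf' with h | ⟨h, ht⟩ <;>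
      rcases hl' k hne hf with h' | ⟨h', ht'⟩
    · omega
    · omega
    · omega
    · exact absurd (htie.trans _ _ _ ht ht') (htie.irrefl k)
  have hwinI : ∀ (t : Fin 3 → ℕ) k, cost k t ≤ 49 →
      (∀ k', k' ≠ k → cost k t < cost k' t) → wins t k := by
    intro t k hf hl
    exact (hwins t k).2 ⟨hf, fun k' h _ => Or.inl (hl k' h)⟩
  have hpe : ∀ (t : Fin 3 → ℕ) k i, wins t k → i ≠ k → payoff t i = t i := by
    intro t k i hk hik
    rw [hpayoff, if_pos ⟨k, hk, Finset.mem_erase.2 ⟨hik, Finset.mem_univ i⟩⟩]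
  have hp0 : ∀ (t : Fin 3 → ℕ) k, wins t k → payoff t k = 0 := by
    intro t k hk
    rw [hpayoff, if_neg]
    rintro ⟨k', hk', hm⟩
    rw [Finset.mem_erase] at hm
    exact hm.1 (huniq t k k' hk hk')
  have hpnone : ∀ (t : Fin 3 → ℕ), ¬(∃ k, wins t k) → ∀ i, payoff t i = 0 := by
    intro t hn i
    rw [hpayoff, if_neg]
    rintro ⟨k, hk, -⟩
    exact hn ⟨k, hk⟩
  apply hno
  have master : ∀ (D : Finset (Fin 3)) (s' : Fin 3 → ℕ) (k : Fin 3),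
      D.Nonempty → (∀ i, 1 ≤ s' i) → (∀ i ∉ D, s' i = s i) →
      cost k s' ≤ 49 → (∀ k', k' ≠ k → cost k s' < cost k' s') →
      (∀ i ∈ D, i ≠ k) → (∀ i ∈ D, payoff s i < s' i) →
      ∃ (D : Finset (Fin 3)) (s' : Fin 3 → ℕ), D.Nonempty ∧ valid s' ∧ (∀ i ∉ D, s' i = s i) ∧
        ∀ i ∈ D, payoff s i < payoff s' i := by
    intro D s' k hD hv hoff hf hl hnk himp
    refine ⟨D, s', hD, (hvalid s').2 hv, hoff, fun i hi => ?_⟩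
    rw [hpe s' k i (hwinI s' k hf hl) (hnk i hi)]
    exact himp i hi
  by_cases hw : ∃ k, wins s k
  · obtain ⟨k, hk⟩ := hw
    have hfeas := ((hwins s k).1 hk).1
    rcases fin3 k with rfl | rfl | rfl
    · -- winner 0 = coalition {1,2}
      rw [h0] at hfeas
      have hs2e : s 2 = 1 := by omega
      have hp : payoff s 0 = 0 := hp0 s 0 hk
      obtain ⟨g2, g1, g0⟩ := hcost ![1, s 1, s 2]
      simp only [Matrix.cons_val_zero, Matrix.cons_val_one, Matrix.head_cons,
          Matrix.cons_val_two, Matrix.tail_cons] at g2 g1 g0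
      by_cases hs1e : s 1 = 1
      · apply master {0} ![1, s 1, s 2] 2
        · exact ⟨0, by decide⟩
        · intro i; fin_cases i
          · exact le_rfl
          · exact hs1
          · exact hs2
        · intro i hi; fin_cases i
          · exact absurd (by decide) hi
          · rfl
          · rfl
        · omega
        · intro k' hne; rcases fin3 k' with rfl | rfl | rfl
          · rw [g2, g0]; omega
          · rw [g2, g1]; omega
          · exact absurd rfl hne
        · decide
        · intro i hi
          rw [Finset.mem_singleton] at hi; subst hi
          rw [hp]; norm_num
      · apply master {0} ![1, s 1, s 2] 1
        · exact ⟨0, by decide⟩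
        · intro i; fin_cases i
          · exact le_rfl
          · exact hs1
          · exact hs2
        · intro i hi; fin_cases i
          · exact absurd (by decide) hi
          · rfl
          · rfl
        · omega
        · intro k' hne; rcases fin3 k' with rfl | rfl | rfl
          · rw [g1, g0]; omega
          · exact absurd rfl hne
          · rw [g1, g2]; omega
        · decide
        · intro i hi
          rw [Finset.mem_singleton] at hi; subst hi
          rw [hp]; norm_num
    · -- winner 1 = coalition {0,2}
      rw [h1] at hfeas
      have hp : payoff s 1 = 0 := hp0 s 1 hk
      obtain ⟨g2, g1, g0⟩ := hcost ![s 0, 1, s 2]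
      simp only [Matrix.cons_val_zero, Matrix.cons_val_one, Matrix.head_cons,
          Matrix.cons_val_two, Matrix.tail_cons] at g2 g1 g0
      apply master {1} ![s 0, 1, s 2] 2
      · exact ⟨1, by decide⟩
      · intro i; fin_cases i
        · exact hs0
        · exact le_rfl
        · exact hs2
      · intro i hi; fin_cases i
        · rfl
        · exact absurd (by decide) hi
        · rfl
      · omega
      · intro k' hne; rcases fin3 k' with rfl | rfl | rfl
        · rw [g2, g0]; omega
        · rw [g2, g1]; omega
        · exact absurd rfl hne
      · decide
      · intro i hi
        rw [Finset.mem_singleton] at hi; subst hi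
        rw [hp]; norm_num
    · -- winner 2 = coalition {0,1}
      rw [h2] at hfeas
      have hp0' : payoff s 0 = s 0 := hpe s 2 0 hk (by decide)
      have hp1' : payoff s 1 = s 1 := hpe s 2 1 hk (by decide)
      have hp2' : payoff s 2 = 0 := hp0 s 2 hk
      by_cases hs0b : 2 ≤ s 0
      · -- B-c: D = {1,2}, s' = (s 0, 3, 1), winner 0
        obtain ⟨g2, g1, g0⟩ := hcost ![s 0, 3, 1]
        simp only [Matrix.cons_val_zero, Matrix.cons_val_one, Matrix.head_cons,
          Matrix.cons_val_two, Matrix.tail_cons] at g2 g1 g0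
        apply master {1, 2} ![s 0, 3, 1] 0
        · exact ⟨1, by decide⟩
        · intro i; fin_cases i
          · exact hs0
          · norm_num
          · exact le_rfl
        · intro i hi; fin_cases i
          · rfl
          · exact absurd (by decide) hi
          · exact absurd (by decide) hi
        · omega
        · intro k' hne; rcases fin3 k' with rfl | rfl | rfl
          · exact absurd rfl hne
          · rw [g0, g1]; omega
          · rw [g0, g2]; omega
        · decide
        · intro i hi
          fin_cases hi
          · rw [hp1']
            show s 1 < 3
            omega
          · rw [hp2']
            show 0 < 1
            norm_num
      · by_cases hs1b : s 1 ≤ 2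
        · -- B-a: D = {0}, s' = (2, s 1, s 2), winner 2
          obtain ⟨g2, g1, g0⟩ := hcost ![2, s 1, s 2]
          simp only [Matrix.cons_val_zero, Matrix.cons_val_one, Matrix.head_cons,
          Matrix.cons_val_two, Matrix.tail_cons] at g2 g1 g0
          apply master {0} ![2, s 1, s 2] 2
          · exact ⟨0, by decide⟩
          · intro i; fin_cases i
            · norm_num
            · exact hs1
            · exact hs2
          · intro i hi; fin_cases i
            · exact absurd (by decide) hi
            · rfl
            · rfl
          · omega
          · intro k' hne; rcases fin3 k' with rfl | rfl | rfl
            · rw [g2, g0]; omega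
            · rw [g2, g1]; omega
            · exact absurd rfl hne
          · decide
          · intro i hi
            rw [Finset.mem_singleton] at hi; subst hi
            rw [hp0']
            show s 0 < 2
            omega
        · -- B-b: s 0 = 1, s 1 = 3, D = {0,2}, s' = (2, 3, 2), winner 1
          have hs0e : s 0 = 1 := by omega
          have hs1e : s 1 = 3 := by omega
          obtain ⟨g2, g1, g0⟩ := hcost ![2, 3, 2]
          simp only [Matrix.cons_val_zero, Matrix.cons_val_one, Matrix.head_cons,
          Matrix.cons_val_two, Matrix.tail_cons] at g2 g1 g0
          apply master {0, 2} ![2, 3, 2] 1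
          · exact ⟨0, by decide⟩
          · intro i; fin_cases i <;> norm_num
          · intro i hi; fin_cases i
            · exact absurd (by decide) hi
            · show 3 = s 1; omega
            · exact absurd (by decide) hi
          · omega
          · intro k' hne; rcases fin3 k' with rfl | rfl | rfl
            · rw [g1, g0]; omega
            · exact absurd rfl hne
            · rw [g1, g2]; omega
          · decide
          · intro i hi
            fin_cases hi
            · rw [hp0']
              show s 0 < 2
              omega
            · rw [hp2']
              show 0 < 2
              norm_num
  · -- no winner: D = {0,1}, s' = (1, 1, s 2), winner 2
    obtain ⟨g2, g1, g0⟩ := hcost ![1, 1, s 2]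
    simp only [Matrix.cons_val_zero, Matrix.cons_val_one, Matrix.head_cons,
          Matrix.cons_val_two, Matrix.tail_cons] at g2 g1 g0
    apply master {0, 1} ![1, 1, s 2] 2
    · exact ⟨0, by decide⟩
    · intro i; fin_cases i
      · exact le_rfl
      · exact le_rfl
      · exact hs2
    · intro i hi; fin_cases i
      · exact absurd (by decide) hi
      · exact absurd (by decide) hi
      · rfl
    · omega
    · intro k' hne; rcases fin3 k' with rfl | rfl | rfl
      · rw [g2, g0]; omega
      · rw [g2, g1]; omega
      · exact absurd rfl hne
    · decide
    · intro i hi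
      rw [hpnone s hw i]
      fin_cases hi <;> norm_num
end

section
/- In the hourly salary model, the set of agents of a rigorously strongly winning coalition can differ from the set of agents of the cheapest feasible coalition. Concretely: with three agents a, b, c all having minimal hourly salary 1, where coalition {a,b} completes the project with times t_a = t_b = 10 and coalition {b,c} with times t_b = 4, t_c = 20, and budget v = 28, the cheapest feasible coalition is {a,b} with cost 20, yet the coalition {b,c} with hourly salaries s_b = 2, s_c = 1 (cost 28) is rigorously strongly winning. -/
open Finset

/-- A coalition: a set of member agents, a salary function, and a total cost (bid). -/
structure Coal (α : Type) where
  mem : Finset α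
  sal : α → ℕ
  cost : ℕ

namespace Coal

variable {α : Type} [DecidableEq α]

/-- `C` is cheaper than `C'`: strictly lower cost, or equal cost and preferred by the
tie-breaking order `prec` on agent sets. -/
def cheaper (prec : Finset α → Finset α → Prop) (C C' : Coal α) : Prop :=
  C.cost < C'.cost ∨ (C.cost = C'.cost ∧ prec C.mem C'.mem)

/-- `C` is explicitly endangered by `C'`: `C'` is feasible, disjoint from `C`, and cheaper. -/
def explEnd (Feas : Coal α → Prop) (prec : Finset α → Finset α → Prop)
    (C C' : Coal α) : Prop :=
  Feas C' ∧ C.mem ∩ C'.mem = ∅ ∧ cheaper prec C' C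

/-- `C` is implicitly endangered by `C'`: `C'` is feasible, overlaps `C`, every shared
agent gets in `C'` at least as good a salary as in `C`, and `C'` differs from `C`
(in member set or salaries of members). -/
def implEnd (Feas : Coal α → Prop) (C C' : Coal α) : Prop :=
  Feas C' ∧ (C.mem ∩ C'.mem).Nonempty ∧
    (∀ i ∈ C.mem ∩ C'.mem, C.sal i ≤ C'.sal i) ∧
    ¬ (C.mem = C'.mem ∧ ∀ i ∈ C.mem, C.sal i = C'.sal i)

/-- `C` is strictly implicitly endangered by `C'`: as implicit endangerment but every
shared agent gets a strictly better salary in `C'`. -/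
def strictImplEnd (Feas : Coal α → Prop) (C C' : Coal α) : Prop :=
  Feas C' ∧ (C.mem ∩ C'.mem).Nonempty ∧
    ∀ i ∈ C.mem ∩ C'.mem, C.sal i < C'.sal i

/-- All members of `C` unanimously propose `C` in the profile `π`. -/
def unan (π : α → Coal α) (C : Coal α) : Prop := ∀ j ∈ C.mem, π j = C

open Classical in
/-- Payoff of agent `i` in the decentralized game: her salary in her proposed coalition if
that coalition is feasible, unanimously proposed, contains her, and no cheaper feasible
unanimously proposed coalition exists; otherwise 0. -/
noncomputable def payoff (Feas : Coal α → Prop) (prec : Finset α → Finset α → Prop)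
    (π : α → Coal α) (i : α) : ℕ :=
  if i ∈ (π i).mem ∧ Feas (π i) ∧ unan π (π i) ∧
      ¬ ∃ C', Feas C' ∧ unan π C' ∧ cheaper prec C' (π i)
  then (π i).sal i else 0

/-- Rigorously Strong Nash Equilibrium: no subset of agents can jointly deviate so that
every deviating agent's payoff is at least her current one and some agent's payoff changes. -/
def RSNE (Feas : Coal α → Prop) (prec : Finset α → Finset α → Prop)
    (π : α → Coal α) : Prop :=
  ¬ ∃ (D : Finset α) (π' : α → Coal α),
    (∀ i ∉ D, π' i = π i) ∧
    (∀ i ∈ D, payoff Feas prec π i ≤ payoff Feas prec π' i) ∧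
    ∃ j, payoff Feas prec π' j ≠ payoff Feas prec π j

/-- `C` is rigorously strongly winning: some RSNE gives the members of `C` the positive
payoffs `C.sal`. -/
def RSWinning (Feas : Coal α → Prop) (prec : Finset α → Finset α → Prop)
    (C : Coal α) : Prop :=
  ∃ π, RSNE Feas prec π ∧ ∀ i ∈ C.mem, payoff Feas prec π i = C.sal i ∧ 0 < C.sal i

/-- Project salary model feasibility: the member set can complete the project, salaries are
at least minimal, the cost is the sum of members' salaries, and the budget is respected. -/
def feasPS (Fset : Finset α → Prop) (m : α → ℕ) (v : ℕ) (C : Coal α) : Prop :=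
  Fset C.mem ∧ (∀ i ∈ C.mem, m i ≤ C.sal i) ∧
    C.cost = ∑ i ∈ C.mem, C.sal i ∧ C.cost ≤ v

/-- Weakly winning coalition: feasible, not explicitly endangered, and every implicitly
endangering feasible coalition is itself explicitly or implicitly endangered. -/
def weaklyWinning (Feas : Coal α → Prop) (prec : Finset α → Finset α → Prop)
    (C : Coal α) : Prop :=
  Feas C ∧ (¬ ∃ C', explEnd Feas prec C C') ∧
    ∀ C', implEnd Feas C C' → ∃ C'', explEnd Feas prec C' C'' ∨ implEnd Feas C' C''

end Coal

/-- Hourly salary feasibility in the concrete instance: agents a = 0, b = 1, c = 2, all with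
minimal hourly salary 1; coalition {a,b} works times (10,10), coalition {b,c} works times
(4,20); cost is the sum of time·salary; budget v = 28. -/
def feas5 (C : Coal (Fin 3)) : Prop :=
  (C.mem = {0, 1} ∧ (∀ i ∈ C.mem, 1 ≤ C.sal i) ∧
    C.cost = 10 * C.sal 0 + 10 * C.sal 1 ∧ C.cost ≤ 28) ∨
  (C.mem = {1, 2} ∧ (∀ i ∈ C.mem, 1 ≤ C.sal i) ∧
    C.cost = 4 * C.sal 1 + 20 * C.sal 2 ∧ C.cost ≤ 28)

/-- In the hourly salary model the agent set of a rigorously strongly winning coalition may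
differ from that of the cheapest feasible coalition: here {a,b} with unit salaries is the
cheapest feasible coalition (cost 20), yet {b,c} with hourly salaries s_b = 2, s_c = 1
(cost 28) is rigorously strongly winning (it is neither explicitly nor implicitly
endangered), and its agent set differs from {a,b}. -/
theorem stmt5 (prec : Finset (Fin 3) → Finset (Fin 3) → Prop)
    (hprec : IsStrictTotalOrder (Finset (Fin 3)) prec) :
    (feas5 ⟨{0, 1}, fun _ => 1, 20⟩ ∧
      (∀ C, feas5 C → 20 ≤ C.cost ∧ (C.cost = 20 → C.mem = {0, 1}))) ∧
    (¬ ∃ C', Coal.explEnd feas5 prec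
        (⟨{1, 2}, fun i => if i = 1 then 2 else 1, 28⟩ : Coal (Fin 3)) C' ∨
      Coal.implEnd feas5
        (⟨{1, 2}, fun i => if i = 1 then 2 else 1, 28⟩ : Coal (Fin 3)) C') ∧
    ({1, 2} : Finset (Fin 3)) ≠ {0, 1} := by

  refine ⟨⟨?_, ?_⟩, ?_, by decide⟩
  · left
    refine ⟨rfl, fun i _ => le_refl 1, by norm_num, by norm_num⟩
  · rintro C (⟨hm, hs, hc, hv⟩ | ⟨hm, hs, hc, hv⟩)
    · have h0 : 1 ≤ C.sal 0 := hs 0 (by rw [hm]; decide)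
      have h1 : 1 ≤ C.sal 1 := hs 1 (by rw [hm]; decide)
      constructor
      · omega
      · intro _; exact hm
    · have h1 : 1 ≤ C.sal 1 := hs 1 (by rw [hm]; decide)
      have h2 : 1 ≤ C.sal 2 := hs 2 (by rw [hm]; decide)
      constructor
      · omega
      · intro h; omega
  · rintro ⟨C', hC'⟩
    rcases hC' with ⟨hF, hdisj, _⟩ | ⟨hF, hne, hsal, hdiff⟩
    · rcases hF with ⟨hm, _⟩ | ⟨hm, _⟩ <;>
      · rw [hm] at hdisj
        exact absurd hdisj (by decide)
    · rcases hF with ⟨hm, hs, hc, hv⟩ | ⟨hm, hs, hc, hv⟩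
      · -- C'.mem = {0,1}, shared agent 1 needs sal ≥ 2, cost ≥ 30 > 28
        have h1m : (1 : Fin 3) ∈ ({1,2} : Finset (Fin 3)) ∩ C'.mem := by
          rw [hm]; decide
        have h1 : 2 ≤ C'.sal 1 := by
          have := hsal 1 h1m
          simpa using this
        have h0 : 1 ≤ C'.sal 0 := hs 0 (by rw [hm]; decide)
        omega
      · -- C'.mem = {1,2}
        have h1m : (1 : Fin 3) ∈ ({1,2} : Finset (Fin 3)) ∩ C'.mem := by
          rw [hm]; decide
        have h2m : (2 : Fin 3) ∈ ({1,2} : Finset (Fin 3)) ∩ C'.mem := by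
          rw [hm]; decide
        have h1 : 2 ≤ C'.sal 1 := by simpa using hsal 1 h1m
        have h2 : 1 ≤ C'.sal 2 := by simpa using hsal 2 h2m
        have e1 : C'.sal 1 = 2 := by omega
        have e2 : C'.sal 2 = 1 := by omega
        apply hdiff
        refine ⟨hm.symm, ?_⟩
        intro i hi
        fin_cases hi <;> simp [e1, e2]
end

section
/- There exists an instance (in both the project salary and hourly salary models) in which a feasible coalition exists but no strongly winning coalition exists. Concretely: with budget v = 5, three identical agents a, b, c each with minimal salary 2 (integer salaries), where exactly the two-agent coalitions are able to complete the project, no coalition is strongly winning. -/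
open Finset

/-- Feasibility in the concrete instance: budget v = 5, three identical agents (Fin 3) with
minimal salary 2; exactly the two-agent coalitions can complete the project; integer
salaries; cost is the sum of members' salaries. -/
def feas7 (C : Coal (Fin 3)) : Prop :=
  C.mem.card = 2 ∧ (∀ i ∈ C.mem, 2 ≤ C.sal i) ∧
    C.cost = ∑ i ∈ C.mem, C.sal i ∧ C.cost ≤ 5

/-- With budget 5, three identical agents with minimal salary 2, and exactly the two-agent
coalitions feasible, a feasible coalition exists but every feasible coalition is explicitly
or strictly implicitly endangered — hence no strongly winning coalition exists. -/
theorem stmt7 (prec : Finset (Fin 3) → Finset (Fin 3) → Prop)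
    (hprec : IsStrictTotalOrder (Finset (Fin 3)) prec) :
    (∃ C, feas7 C) ∧
    ∀ C, feas7 C →
      ∃ C', Coal.explEnd feas7 prec C C' ∨ Coal.strictImplEnd feas7 C C' := by
  constructor
  · refine ⟨⟨{0, 1}, fun _ => 2, 4⟩, ?_, ?_, ?_, ?_⟩ <;> decide
  · rintro C ⟨hcard, hsal, hcost, hle⟩
    obtain ⟨i, k, hik, hmem⟩ := Finset.card_eq_two.mp hcard
    have hsum : C.cost = C.sal i + C.sal k := by
      rw [hcost, hmem, Finset.sum_pair hik]
    obtain ⟨i0, hi0mem, hi0⟩ : ∃ i0 ∈ C.mem, C.sal i0 = 2 := by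
      have hi := hsal i (by simp [hmem])
      have hk := hsal k (by simp [hmem])
      rcases (by omega : C.sal i = 2 ∨ C.sal k = 2) with h | h
      · exact ⟨i, by simp [hmem], h⟩
      · exact ⟨k, by simp [hmem], h⟩
    obtain ⟨j, hj⟩ : ∃ j, j ∉ C.mem := by
      by_contra h
      push_neg at h
      have huniv : C.mem = Finset.univ := Finset.eq_univ_iff_forall.mpr h
      rw [huniv] at hcard
      simp at hcard
    have hij : i0 ≠ j := fun h => hj (h ▸ hi0mem)
    refine ⟨⟨{i0, j}, fun x => if x = i0 then 3 else 2, 5⟩, Or.inr ⟨⟨?_, ?_, ?_, ?_⟩, ?_, ?_⟩⟩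
    · simp [Finset.card_insert_of_notMem, hij]
    · intro x hx
      by_cases h : x = i0 <;> simp [h]
    · simp [Finset.sum_pair hij, hij.symm, Ne.symm hij]
    · exact le_refl 5
    · exact ⟨i0, by simp [hi0mem]⟩
    · intro x hx
      simp only [Finset.mem_inter, Finset.mem_insert, Finset.mem_singleton] at hx
      have hxi0 : x = i0 := by
        rcases hx.2 with h | h
        · exact h
        · exact absurd (h ▸ hx.1) hj
      subst hxi0
      simp [hi0]
end

section
/- The problem FFCPS (Find Feasible Coalition, Project Salary) is NP-hard even for two agents: the Partition problem reduces to it. Specifically, given integers n_1, …, n_k, construct k tasks, two agents a, b with processing times s_{a,j} = s_{b,j} = n_j, unit costs, unlimited budget, and deadline d = (∑_j n_j)/2; then a feasible assignment of all tasks to the two agents respecting the deadline exists if and only if the multiset {n_j} can be partitioned into two parts of equal sum. -/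
open Finset

/-- FFCPS is NP-hard for two agents via the Partition reduction: with tasks of sizes `a j`,
two identical agents, unlimited budget, and deadline `d` with `2·d = ∑ a j`, a feasible
assignment of all tasks to the two agents meeting the deadline exists iff the numbers can
be partitioned into two parts of equal sum. -/
theorem stmt11 (k : ℕ) (a : Fin k → ℕ) (ha : ∀ j, 0 < a j) (d : ℕ)
    (hd : 2 * d = ∑ j, a j) :
    (∃ Φ : Fin k → Fin 2, ∀ i : Fin 2,
        ∑ j ∈ Finset.univ.filter (fun j => Φ j = i), a j ≤ d) ↔
    ∃ S : Finset (Fin k), 2 * ∑ j ∈ S, a j = ∑ j, a j := by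
  constructor
  · rintro ⟨Φ, hΦ⟩
    refine ⟨Finset.univ.filter (fun j => Φ j = 0), ?_⟩
    have hsplit : ∑ j ∈ Finset.univ.filter (fun j => Φ j = 0), a j
        + ∑ j ∈ Finset.univ.filter (fun j => Φ j = 1), a j = ∑ j, a j := by
      rw [← Finset.sum_filter_add_sum_filter_not Finset.univ (fun j => Φ j = 0) a]
      congr 1
      apply Finset.sum_congr _ (fun _ _ => rfl)
      ext j
      have := (Φ j).isLt
      simp only [Finset.mem_filter, Finset.mem_univ, true_and, Fin.ext_iff, Fin.val_zero, Fin.val_one]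
      omega
    have h0 := hΦ 0
    have h1 := hΦ 1
    omega
  · rintro ⟨S, hS⟩
    refine ⟨fun j => if j ∈ S then 0 else 1, fun i => ?_⟩
    have hi : i = 0 ∨ i = 1 := by omega
    rcases hi with hi | hi <;> subst hi
    · have : Finset.univ.filter (fun j => (if j ∈ S then (0:Fin 2) else 1) = 0) = S := by
        ext j; by_cases h : j ∈ S <;> simp [h]
      simp only [this]; omega
    · have : Finset.univ.filter (fun j => (if j ∈ S then (0:Fin 2) else 1) = 1) = Sᶜ := by
        ext j; by_cases h : j ∈ S <;> simp [h]
      simp only [this]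
      have := Finset.sum_add_sum_compl S a
      omega
end

section
/- The Exact Cover by 3-Sets problem reduces to FFCPS with unit speeds: given a ground set T of q elements and a family S_1, …, S_n of 3-element subsets, construct q tasks and n agents with s_{i,j} = 1 if t_j ∈ S_i and s_{i,j} = ∞ otherwise, deadline d = 3, all minimal salaries 1, and budget v = q/3. Then there exists a feasible coalition (a set of agents N' with ∑_{i∈N'} 1 ≤ q/3 and an assignment of all tasks to agents in N' with each agent's total load at most 3) if and only if T can be exactly covered by q/3 of the sets S_i. -/
open Finset

/-- Reduction from Exact Cover by 3-Sets to FFCPS with unit processing times, deadline 3,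
unit minimal salaries and budget q/3: a feasible coalition (a set `N'` of at most q/3 agents
and an assignment of every task to an agent of `N'` that can process it, each agent's load
at most 3) exists iff the ground set can be exactly covered by q/3 of the sets. -/
theorem stmt12 (q n : ℕ) (hq : 3 ∣ q) (S : Fin n → Finset (Fin q))
    (hS : ∀ i, (S i).card = 3) :
    (∃ (N' : Finset (Fin n)) (Φ : Fin q → Fin n),
        N'.card ≤ q / 3 ∧ (∀ j, Φ j ∈ N') ∧ (∀ j, j ∈ S (Φ j)) ∧
        ∀ i, (Finset.univ.filter (fun j => Φ j = i)).card ≤ 3) ↔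
    ∃ I : Finset (Fin n), I.card = q / 3 ∧ ∀ j : Fin q, ∃! i, i ∈ I ∧ j ∈ S i := by
  have hq3 : 3 * (q / 3) = q := Nat.mul_div_cancel' hq
  constructor
  · rintro ⟨N', Φ, hcard, hmem, hSΦ, hload⟩
    set I := Finset.image Φ Finset.univ with hI
    have hsub : I ⊆ N' := Finset.image_subset_iff.mpr fun j _ => hmem j
    have hIle : I.card ≤ q / 3 := le_trans (Finset.card_le_card hsub) hcard
    have hsum : ∑ i ∈ I, (Finset.univ.filter (fun j => Φ j = i)).card = q := by
      have := Finset.card_eq_sum_card_fiberwise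
        (f := Φ) (s := (Finset.univ : Finset (Fin q))) (t := I)
        (fun x _ => Finset.mem_image_of_mem Φ (Finset.mem_univ x))
      simpa using this.symm
    have hge : q ≤ I.card * 3 := by
      calc q = ∑ i ∈ I, (Finset.univ.filter (fun j => Φ j = i)).card := hsum.symm
        _ ≤ ∑ _i ∈ I, 3 := Finset.sum_le_sum fun i _ => hload i
        _ = I.card * 3 := by simp [Finset.sum_const, Nat.smul_one_eq_cast]
    have hIcard : I.card = q / 3 := by omega
    have hfib : ∀ i ∈ I, (Finset.univ.filter (fun j => Φ j = i)).card = 3 := by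
      by_contra h
      push_neg at h
      obtain ⟨i, hi, hne⟩ := h
      have hlt : (Finset.univ.filter (fun j => Φ j = i)).card < 3 :=
        lt_of_le_of_ne (hload i) hne
      have hlt2 : ∑ i ∈ I, (Finset.univ.filter (fun j => Φ j = i)).card < ∑ _i ∈ I, 3 :=
        Finset.sum_lt_sum (fun i _ => hload i) ⟨i, hi, hlt⟩
      rw [hsum, Finset.sum_const, smul_eq_mul] at hlt2
      omega
    have hfibeq : ∀ i ∈ I, (Finset.univ.filter (fun j => Φ j = i)) = S i := by
      intro i hi
      apply Finset.eq_of_subset_of_card_le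
      · intro j hj
        have : Φ j = i := (Finset.mem_filter.mp hj).2
        exact this ▸ hSΦ j
      · rw [hS i, hfib i hi]
    refine ⟨I, hIcard, fun j => ⟨Φ j, ⟨Finset.mem_image_of_mem Φ (Finset.mem_univ j), hSΦ j⟩, ?_⟩⟩
    rintro i ⟨hiI, hjS⟩
    have := hfibeq i hiI
    have hj : j ∈ Finset.univ.filter (fun j => Φ j = i) := this ▸ hjS
    exact ((Finset.mem_filter.mp hj).2).symm
  · rintro ⟨I, hIcard, hcover⟩
    choose f hf huniq using hcover
    refine ⟨I, fun j => f j, le_of_eq hIcard, fun j => (hf j).1, fun j => (hf j).2, ?_⟩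
    intro i
    have hsub : (Finset.univ.filter (fun j => f j = i)) ⊆ S i := by
      intro j hj
      have : f j = i := (Finset.mem_filter.mp hj).2
      exact this ▸ (hf j).2
    calc (Finset.univ.filter (fun j => f j = i)).card ≤ (S i).card :=
          Finset.card_le_card hsub
      _ = 3 := hS i
end

section
/- In the reduction from Exact Set Cover to FFCHS (hourly salary model), the constructed instance has a feasible coalition if and only if the exact set cover instance is a yes-instance. The construction: from ground set T of q elements (q divisible by 3) and 3-element subsets S_1,…,S_n, build q + n tasks and 2n agents, all minimal hourly salaries 1; for i ≤ n: s_{i,j} = 2 if j ≤ q and t_j ∈ S_i (else ∞), and s_{i,q+i} = 5 (else ∞ for dummy tasks); for i > n: s_{i, q+(i−n)} = 6 and all other entries ∞; deadline d = 6, budget v = (7/3)q + 5n. Then an assignment Φ of all q+n tasks to agents with each agent's load at most 6 and total cost ∑_i ∑_{j: Φ(t_j)=i} s_{i,j} ≤ v exists iff T has an exact cover by q/3 of the sets. -/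
open Finset

/-- Which agent may process which task in the FFCHS reduction from Exact Set Cover.
Agents: `Sum.inl i` (i ≤ n, corresponding to the set S_i) and `Sum.inr i` (dummy agents).
Tasks: `Sum.inl j` (elements of the ground set) and `Sum.inr j` (dummy tasks). -/
def allowed13 (q n : ℕ) (S : Fin n → Finset (Fin q)) :
    (Fin n ⊕ Fin n) → (Fin q ⊕ Fin n) → Prop
  | Sum.inl i, Sum.inl j => j ∈ S i
  | Sum.inl i, Sum.inr j => j = i
  | Sum.inr i, Sum.inr j => j = i
  | Sum.inr _, Sum.inl _ => False

/-- Processing times in the FFCHS reduction: a set-agent processes an element task in 2,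
its own dummy task in 5; a dummy agent processes its dummy task in 6. -/
def time13 (q n : ℕ) : (Fin n ⊕ Fin n) → (Fin q ⊕ Fin n) → ℕ
  | Sum.inl _, Sum.inl _ => 2
  | Sum.inl _, Sum.inr _ => 5
  | Sum.inr _, Sum.inr _ => 6
  | Sum.inr _, Sum.inl _ => 0

/-- Correctness of the reduction from Exact Set Cover to FFCHS (all hourly salaries 1,
deadline 6, budget (7/3)q + 5n): an assignment of all q + n tasks to allowed agents with
every agent's load at most 6 and total cost at most 7·(q/3) + 5·n exists iff the ground set
has an exact cover by q/3 of the 3-element sets. -/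
theorem stmt13 (q n : ℕ) (hq : 3 ∣ q) (S : Fin n → Finset (Fin q))
    (hS : ∀ i, (S i).card = 3)
    (hocc : ∀ j : Fin q, (Finset.univ.filter (fun i => j ∈ S i)).card ≤ 3) :
    (∃ Φ : (Fin q ⊕ Fin n) → (Fin n ⊕ Fin n),
        (∀ t, allowed13 q n S (Φ t) t) ∧
        (∀ a, ∑ t ∈ Finset.univ.filter (fun t => Φ t = a), time13 q n a t ≤ 6) ∧
        ∑ t : Fin q ⊕ Fin n, time13 q n (Φ t) t ≤ 7 * (q / 3) + 5 * n) ↔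
    ∃ I : Finset (Fin n), I.card = q / 3 ∧ ∀ j : Fin q, ∃! i, i ∈ I ∧ j ∈ S i := by
  obtain ⟨m, rfl⟩ := hq
  have hm3 : 3 * m / 3 = m := by omega
  constructor
  · rintro ⟨Φ, hall, hload, hcost⟩
    have hg : ∀ j : Fin (3*m), ∃ i, Φ (Sum.inl j) = Sum.inl i ∧ j ∈ S i := by
      intro j
      have h := hall (Sum.inl j)
      cases hc : Φ (Sum.inl j) with
      | inl i => exact ⟨i, rfl, by rw [hc] at h; exact h⟩
      | inr i => rw [hc] at h; exact absurd h (by simp [allowed13])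
    choose g hg1 hg2 using hg
    set I : Finset (Fin n) := univ.filter (fun i => Φ (Sum.inr i) = Sum.inr i) with hI
    have hdum : ∀ j : Fin n, Φ (Sum.inr j) = Sum.inl j ∨ Φ (Sum.inr j) = Sum.inr j := by
      intro j
      have h := hall (Sum.inr j)
      cases hc : Φ (Sum.inr j) with
      | inl i =>
        rw [hc] at h; simp only [allowed13] at h
        subst h; exact Or.inl rfl
      | inr i =>
        rw [hc] at h; simp only [allowed13] at h
        subst h; exact Or.inr rfl
    have hcost' : ∑ t : Fin (3*m) ⊕ Fin n, time13 (3*m) n (Φ t) t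
        = 2*(3*m) + (5*n + I.card) := by
      rw [Fintype.sum_sum_type]
      have e1 : ∀ j : Fin (3*m), time13 (3*m) n (Φ (Sum.inl j)) (Sum.inl j) = 2 := by
        intro j; rw [hg1 j]; rfl
      have e2 : ∀ j : Fin n, time13 (3*m) n (Φ (Sum.inr j)) (Sum.inr j)
          = 5 + (if Φ (Sum.inr j) = Sum.inr j then 1 else 0) := by
        intro j
        rcases hdum j with h | h <;> rw [h] <;> simp [time13]
      rw [Finset.sum_congr rfl (fun j _ => e1 j), Finset.sum_congr rfl (fun j _ => e2 j),
        Finset.sum_add_distrib]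
      simp [Finset.sum_boole, hI, mul_comm]
    have hIcard : I.card ≤ m := by
      rw [hcost', hm3] at hcost
      omega
    have hgI : ∀ j, g j ∈ I := by
      intro j
      by_contra hcon
      have hd : Φ (Sum.inr (g j)) = Sum.inl (g j) :=
        (hdum (g j)).resolve_right (by simpa [hI] using hcon)
      have hsub : ({Sum.inl j, Sum.inr (g j)} : Finset (Fin (3*m) ⊕ Fin n)) ⊆
          univ.filter (fun t => Φ t = Sum.inl (g j)) := by
        intro t ht
        simp only [mem_insert, mem_singleton] at ht
        rcases ht with rfl | rfl
        · simp [hg1 j]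
        · simp [hd]
      have hle := Finset.sum_le_sum_of_subset (f := time13 (3*m) n (Sum.inl (g j))) hsub
      rw [Finset.sum_insert (by simp), Finset.sum_singleton] at hle
      have e1 : time13 (3*m) n (Sum.inl (g j)) (Sum.inl j) = 2 := rfl
      have e2 : time13 (3*m) n (Sum.inl (g j)) (Sum.inr (g j)) = 5 := rfl
      rw [e1, e2] at hle
      have := hload (Sum.inl (g j))
      omega
    set K := univ.image g with hK
    have hKI : K ⊆ I := by
      intro i hi
      rw [hK, mem_image] at hi
      obtain ⟨j, _, rfl⟩ := hi
      exact hgI j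
    have hfib_sub : ∀ i, univ.filter (fun j => g j = i) ⊆ S i := by
      intro i j hj
      rw [mem_filter] at hj
      rw [← hj.2]
      exact hg2 j
    have hfib_le : ∀ i, (univ.filter (fun j => g j = i)).card ≤ 3 := by
      intro i
      calc (univ.filter (fun j => g j = i)).card ≤ (S i).card := card_le_card (hfib_sub i)
        _ = 3 := hS i
    have hsumfib : ∑ i ∈ K, (univ.filter (fun j => g j = i)).card = 3*m := by
      rw [← Finset.card_eq_sum_card_fiberwise
        (fun j _ => Finset.mem_image_of_mem g (mem_univ j))]
      simp
    have hKm : 3*m ≤ 3*K.card := by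
      calc 3*m = ∑ i ∈ K, (univ.filter (fun j => g j = i)).card := hsumfib.symm
        _ ≤ ∑ _i ∈ K, 3 := Finset.sum_le_sum fun i _ => hfib_le i
        _ = 3*K.card := by rw [Finset.sum_const, smul_eq_mul, mul_comm]
    have hKcard : K.card = m := by
      have h1 : K.card ≤ m := (card_le_card hKI).trans hIcard
      omega
    have hfib_eq : ∀ i ∈ K, univ.filter (fun j => g j = i) = S i := by
      intro i hi
      refine Finset.eq_of_subset_of_card_le (hfib_sub i) ?_
      rw [hS i]
      by_contra hcon
      push_neg at hcon
      have hlt : ∑ i ∈ K, (univ.filter (fun j => g j = i)).card < ∑ _i ∈ K, 3 :=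
        Finset.sum_lt_sum (fun i _ => hfib_le i) ⟨i, hi, hcon⟩
      rw [hsumfib, Finset.sum_const, smul_eq_mul, hKcard] at hlt
      omega
    refine ⟨K, by rw [hKcard, hm3], fun j => ⟨g j,
      ⟨Finset.mem_image_of_mem g (mem_univ j), hg2 j⟩, ?_⟩⟩
    rintro i ⟨hiK, hjS⟩
    have hmem : j ∈ univ.filter (fun j => g j = i) := (hfib_eq i hiK) ▸ hjS
    rw [mem_filter] at hmem
    exact hmem.2.symm
  · rintro ⟨I, hIcard, hcover⟩
    have hex : ∀ j : Fin (3*m), ∃ i, (i ∈ I ∧ j ∈ S i) ∧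
        ∀ y, (y ∈ I ∧ j ∈ S y) → y = i := fun j => hcover j
    choose c hc1 hc2 using hex
    classical
    set Φ : (Fin (3*m) ⊕ Fin n) → (Fin n ⊕ Fin n) := fun t =>
      match t with
      | Sum.inl j => Sum.inl (c j)
      | Sum.inr j => if j ∈ I then Sum.inr j else Sum.inl j with hΦ
    have hΦl : ∀ j, Φ (Sum.inl j) = Sum.inl (c j) := fun j => rfl
    have hΦr : ∀ j, Φ (Sum.inr j) = if j ∈ I then Sum.inr j else Sum.inl j := fun j => rfl
    refine ⟨Φ, ?_, ?_, ?_⟩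
    · intro t
      cases t with
      | inl j => rw [hΦl]; exact (hc1 j).2
      | inr j =>
        rw [hΦr]
        by_cases h : j ∈ I <;> simp [h, allowed13]
    · have hsplit : ∀ a, ∑ t ∈ univ.filter (fun t => Φ t = a), time13 (3*m) n a t
          = (∑ j : Fin (3*m), if Φ (Sum.inl j) = a then time13 (3*m) n a (Sum.inl j) else 0)
          + ∑ j : Fin n, if Φ (Sum.inr j) = a then time13 (3*m) n a (Sum.inr j) else 0 := by
        intro a
        rw [Finset.sum_filter, Fintype.sum_sum_type]
      intro a
      rw [hsplit]
      cases a with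
      | inl i =>
        have h1 : (∑ j : Fin (3*m),
            if Φ (Sum.inl j) = Sum.inl i then time13 (3*m) n (Sum.inl i) (Sum.inl j) else 0)
            ≤ 6 := by
          have e : ∀ j : Fin (3*m),
              (if Φ (Sum.inl j) = Sum.inl i then time13 (3*m) n (Sum.inl i) (Sum.inl j) else 0)
              = if c j = i then 2 else 0 := by
            intro j
            rw [hΦl]
            by_cases h : c j = i <;> simp [h, time13]
          rw [Finset.sum_congr rfl (fun j _ => e j), ← Finset.sum_filter]
          have hsub : univ.filter (fun j => c j = i) ⊆ S i := by
            intro j hj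
            rw [mem_filter] at hj
            rw [← hj.2]
            exact (hc1 j).2
          calc ∑ _j ∈ univ.filter (fun j => c j = i), 2
              = 2 * (univ.filter (fun j => c j = i)).card := by
                rw [Finset.sum_const, smul_eq_mul, mul_comm]
            _ ≤ 2 * 3 := by
                have := (card_le_card hsub).trans_eq (hS i)
                omega
        have h2 : (∑ j : Fin n,
            if Φ (Sum.inr j) = Sum.inl i then time13 (3*m) n (Sum.inl i) (Sum.inr j) else 0)
            ≤ if i ∈ I then 0 else 5 := by
          have e : ∀ j : Fin n,
              (if Φ (Sum.inr j) = Sum.inl i then time13 (3*m) n (Sum.inl i) (Sum.inr j) else 0)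
              ≤ if j = i ∧ i ∉ I then 5 else 0 := by
            intro j
            rw [hΦr]
            by_cases h : j ∈ I
            · simp [h]
            · by_cases hji : j = i
              · subst hji; simp [h, time13]
              · simp [h, hji]
          calc _ ≤ ∑ j : Fin n, if j = i ∧ i ∉ I then 5 else 0 :=
                Finset.sum_le_sum fun j _ => e j
            _ ≤ _ := by
                by_cases h : i ∈ I <;> simp [h, Finset.sum_ite_eq']
        have h3 : (if i ∈ I then 0 else 5) ≤ 5 := by split <;> omega
        -- combine: if i ∈ I then h1 bound works only if h2 = 0 in that case
        -- split on i ∈ I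
        by_cases h : i ∈ I
        · simp only [h, if_true] at h2
          omega
        · -- first sum is zero since c j ∈ I always
          have h1' : (∑ j : Fin (3*m),
              if Φ (Sum.inl j) = Sum.inl i then time13 (3*m) n (Sum.inl i) (Sum.inl j) else 0)
              = 0 := by
            refine Finset.sum_eq_zero fun j _ => ?_
            rw [hΦl]
            have : c j ≠ i := fun hh => h (hh ▸ (hc1 j).1)
            simp [this]
          simp only [h, if_false] at h2
          omega
      | inr i =>
        have h1 : (∑ j : Fin (3*m),
            if Φ (Sum.inl j) = Sum.inr i then time13 (3*m) n (Sum.inr i) (Sum.inl j) else 0)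
            = 0 := by
          refine Finset.sum_eq_zero fun j _ => ?_
          rw [hΦl]; simp
        have h2 : (∑ j : Fin n,
            if Φ (Sum.inr j) = Sum.inr i then time13 (3*m) n (Sum.inr i) (Sum.inr j) else 0)
            ≤ 6 := by
          have e : ∀ j : Fin n,
              (if Φ (Sum.inr j) = Sum.inr i then time13 (3*m) n (Sum.inr i) (Sum.inr j) else 0)
              ≤ if j = i then 6 else 0 := by
            intro j
            rw [hΦr]
            by_cases hji : j = i
            · subst hji; by_cases h : j ∈ I <;> simp [h, time13]
            · by_cases h : j ∈ I <;> simp [h, hji]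
          calc _ ≤ ∑ j : Fin n, if j = i then 6 else 0 := Finset.sum_le_sum fun j _ => e j
            _ ≤ 6 := by simp [Finset.sum_ite_eq']
        omega
    · rw [Fintype.sum_sum_type]
      have e1 : ∀ j : Fin (3*m), time13 (3*m) n (Φ (Sum.inl j)) (Sum.inl j) = 2 := by
        intro j; rw [hΦl]; rfl
      have e2 : ∀ j : Fin n, time13 (3*m) n (Φ (Sum.inr j)) (Sum.inr j)
          = 5 + (if j ∈ I then 1 else 0) := by
        intro j; rw [hΦr]; by_cases h : j ∈ I <;> simp [h, time13]
      rw [Finset.sum_congr rfl (fun j _ => e1 j), Finset.sum_congr rfl (fun j _ => e2 j),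
        Finset.sum_add_distrib]
      have : (∑ j : Fin n, if j ∈ I then 1 else 0) = I.card := by
        simp [Finset.sum_boole]
      rw [this, hIcard, hm3]
      simp only [Finset.sum_const, Finset.card_univ, Fintype.card_fin, smul_eq_mul]
      omega
end

section
/- The inapproximability reduction for FFCPS is correct: given a SetCover instance with elements t_1,…,t_q and sets S_1,…,S_n, and any α ≥ 1, construct q tasks and n agents with s_{i,j} = 1 if t_j ∈ S_i and s_{i,j} = αq + 1 otherwise, and unit agent costs. Then (i) if T can be covered by K sets, there is an assignment of all tasks to K agents with makespan at most q; and (ii) any assignment of all tasks to a set of agents with makespan at most αq only assigns task t_j to agents i with t_j ∈ S_i, so the used agents correspond to a set cover of T. -/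
open Finset

/-- Correctness of the inapproximability gadget for FFCPS built from a SetCover instance:
processing time 1 if the task's element belongs to the agent's set, and α·q + 1 otherwise.
(i) A cover by K sets yields an assignment using at most K agents with makespan at most q.
(ii) Any assignment with makespan at most α·q only assigns tasks to agents whose set
contains the corresponding element, so the used agents form a set cover. -/
theorem stmt14 (q n : ℕ) (S : Fin n → Finset (Fin q)) (α : ℕ) (hα : 1 ≤ α) (K : ℕ)
    (time : Fin n → Fin q → ℕ)
    (htime : ∀ i j, time i j = if j ∈ S i then 1 else α * q + 1) :
    ((∃ I : Finset (Fin n), I.card = K ∧ ∀ j, ∃ i ∈ I, j ∈ S i) →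
      ∃ Φ : Fin q → Fin n, (Finset.univ.image Φ).card ≤ K ∧
        ∀ i, ∑ j ∈ Finset.univ.filter (fun j => Φ j = i), time i j ≤ q) ∧
    (∀ Φ : Fin q → Fin n,
      (∀ i, ∑ j ∈ Finset.univ.filter (fun j => Φ j = i), time i j ≤ α * q) →
      (∀ j, j ∈ S (Φ j)) ∧ ∀ j, ∃ i ∈ Finset.univ.image Φ, j ∈ S i) := by
  constructor
  · rintro ⟨I, hIcard, hcov⟩
    choose f hfI hfS using hcov
    refine ⟨f, ?_, ?_⟩
    · calc (Finset.univ.image f).card ≤ I.card := by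
            apply Finset.card_le_card
            intro i hi
            obtain ⟨j, _, rfl⟩ := Finset.mem_image.mp hi
            exact hfI j
        _ = K := hIcard
    · intro i
      calc ∑ j ∈ Finset.univ.filter (fun j => f j = i), time i j
          = ∑ j ∈ Finset.univ.filter (fun j => f j = i), 1 := by
            apply Finset.sum_congr rfl
            intro j hj
            rw [Finset.mem_filter] at hj
            rw [htime, if_pos (hj.2 ▸ hfS j)]
        _ = (Finset.univ.filter (fun j => f j = i)).card := by simp
        _ ≤ Finset.univ.card := Finset.card_filter_le _ _
        _ = q := by simp
  · intro Φ hmak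
    have hmem : ∀ j, j ∈ S (Φ j) := by
      intro j
      by_contra hj
      have h1 : time (Φ j) j ≤ ∑ j' ∈ Finset.univ.filter (fun j' => Φ j' = Φ j), time (Φ j) j' :=
        Finset.single_le_sum (f := fun j' => time (Φ j) j') (fun _ _ => Nat.zero_le _) (Finset.mem_filter.mpr ⟨Finset.mem_univ j, rfl⟩)
      have h2 := hmak (Φ j)
      rw [htime, if_neg hj] at h1
      omega
    exact ⟨hmem, fun j => ⟨Φ j, Finset.mem_image.mpr ⟨j, Finset.mem_univ j, rfl⟩, hmem j⟩⟩
end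

section
/- In the three-agent example with budget v = 5, identical agents a, b, c with minimal salary 2, integer salaries, and exactly the two-agent coalitions feasible, the von Neumann–Morgenstern stable set of the domination relation on feasible coalitions is empty. -/
open Finset

/-- Feasible outcomes of the three-agent example: budget v = 5, agents Fin 3 with minimal
salary 2, exactly the two-agent coalitions feasible, integer salaries. -/
def feas17 (C : Coal (Fin 3)) : Prop :=
  C.mem.card = 2 ∧ (∀ i ∈ C.mem, 2 ≤ C.sal i) ∧
    C.cost = ∑ i ∈ C.mem, C.sal i ∧ C.cost ≤ 5

/-- Payoff of agent `i` under outcome `C`: her salary if she is a member, else 0. -/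
def pay17 (C : Coal (Fin 3)) (i : Fin 3) : ℕ :=
  if i ∈ C.mem then C.sal i else 0

/-- Outcome `C'` dominates outcome `C`: `C'` is feasible and every member of `C'` gets in
`C'` a strictly higher payoff than under `C`. -/
def dom17 (C' C : Coal (Fin 3)) : Prop :=
  feas17 C' ∧ ∀ i ∈ C'.mem, pay17 C i < pay17 C' i

-- auxiliary lemmas
lemma sal_le_three {C : Coal (Fin 3)} (hf : feas17 C) {i : Fin 3} (hi : i ∈ C.mem) :
    C.sal i ≤ 3 := by
  obtain ⟨hcard, hmin, hcost, hle⟩ := hf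
  obtain ⟨a, b, hab, hm⟩ := Finset.card_eq_two.mp hcard
  have hsum : C.cost = C.sal a + C.sal b := by
    rw [hcost, hm, Finset.sum_pair hab]
  have ha2 : 2 ≤ C.sal a := hmin a (by simp [hm])
  have hb2 : 2 ≤ C.sal b := hmin b (by simp [hm])
  rw [hm] at hi
  simp only [Finset.mem_insert, Finset.mem_singleton] at hi
  rcases hi with rfl | rfl <;> omega

lemma two_set_eq {x y z : Fin 3} (hyz : y ≠ z)
    (h : ∀ i : Fin 3, i ≠ x → i ∈ ({y, z} : Finset (Fin 3))) :
    ∀ s : Finset (Fin 3), s.card = 2 → x ∉ s → s = {y, z} := by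
  intro s h2 hx
  apply Finset.eq_of_subset_of_card_le
  · intro i hi
    exact h i (fun e => hx (e ▸ hi))
  · rw [Finset.card_pair hyz, h2]

lemma key_dom {x y z : Fin 3}
    (hu : ∀ s : Finset (Fin 3), s.card = 2 → x ∉ s → s = {y, z})
    {C C' : Coal (Fin 3)}
    (hCm : C.mem = {x, y}) (hCx : C.sal x = 3) (hCy : C.sal y = 2)
    (hd : dom17 C' C) :
    C'.mem = {y, z} ∧ C'.sal y = 3 ∧ C'.sal z = 2 := by
  obtain ⟨hf', hdom⟩ := hd
  have hpay : ∀ i ∈ C'.mem, (if i ∈ C.mem then C.sal i else 0) < C'.sal i := by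
    intro i hi
    have h := hdom i hi
    simp only [pay17, if_pos hi] at h
    exact h
  have hxnot : x ∉ C'.mem := by
    intro hx
    have h1 := hpay x hx
    have h2 := sal_le_three hf' hx
    simp [hCm, hCx] at h1
    omega
  have hmem : C'.mem = {y, z} := hu C'.mem hf'.1 hxnot
  have hy : y ∈ C'.mem := by simp [hmem]
  have hz : z ∈ C'.mem := by simp [hmem]
  have hyv : C'.sal y = 3 := by
    have h1 := hpay y hy
    have h2 := sal_le_three hf' hy
    simp [hCm, hCy] at h1
    omega
  have hyz : y ≠ z := by
    intro h; rw [h] at hmem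
    have := hf'.1; rw [hmem] at this; simp at this
  have hzv : C'.sal z = 2 := by
    obtain ⟨_, hmin, hcost, hle⟩ := hf'
    have hsum : C'.cost = C'.sal y + C'.sal z := by
      rw [hcost, hmem, Finset.sum_pair hyz]
    have := hmin z hz
    omega
  exact ⟨hmem, hyv, hzv⟩

lemma key_dom' {x y z : Fin 3} (hxy : x ≠ y) (hxz : x ≠ z) (hyz : y ≠ z)
    {C C' : Coal (Fin 3)}
    (hCm : C.mem = {x, y}) (hCy : C.sal y = 2)
    (hC'm : C'.mem = {y, z}) (hC'y : C'.sal y = 3) (hC'z : C'.sal z = 2)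
    (hf' : feas17 C') :
    dom17 C' C := by
  refine ⟨hf', ?_⟩
  have hznot : z ∉ C.mem := by
    rw [hCm]; simp only [Finset.mem_insert, Finset.mem_singleton]
    push_neg
    exact ⟨Ne.symm hxz, Ne.symm hyz⟩
  intro i hi
  rw [hC'm] at hi
  simp only [Finset.mem_insert, Finset.mem_singleton] at hi
  rcases hi with rfl | rfl
  · simp [pay17, hCm, hC'm, hCy, hC'y]
  · simp [pay17, hC'm, hC'z, hznot]

/-- Witness coalition with members {x,y}, salary 3 for x, 2 otherwise. -/
def W17 (x y : Fin 3) : Coal (Fin 3) :=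
  ⟨{x, y}, fun i => if i = x then 3 else 2, 5⟩

lemma W17_feas {x y : Fin 3} (hxy : x ≠ y) : feas17 (W17 x y) := by
  refine ⟨?_, ?_, ?_, le_refl 5⟩
  · rw [show (W17 x y).mem = {x, y} from rfl, Finset.card_pair hxy]
  · intro i _; by_cases h : i = x <;> simp [W17, h]
  · show 5 = ∑ i ∈ ({x, y} : Finset (Fin 3)), _
    rw [Finset.sum_pair hxy]
    simp [W17, Ne.symm hxy]

/-- In the three-agent example (v = 5, minimal salaries 2, two-agent coalitions feasible),
no von Neumann–Morgenstern stable set of the domination relation exists: there is no set K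
of feasible outcomes that is internally stable (no member dominates another member) and
externally stable (every feasible outcome outside K is dominated by some member of K). -/
theorem stmt17 :
    ¬ ∃ K : Set (Coal (Fin 3)),
      (∀ C ∈ K, feas17 C) ∧
      (∀ C ∈ K, ∀ C' ∈ K, ¬ dom17 C' C) ∧
      (∀ C, feas17 C → C ∉ K → ∃ C' ∈ K, dom17 C' C) := by
  rintro ⟨K, hfeas, hint, hext⟩
  -- abbreviation: K contains a coalition with members {x,y}, salaries (3,2)
  let P : Fin 3 → Fin 3 → Prop := fun x y =>
    ∃ C ∈ K, C.mem = {x, y} ∧ C.sal x = 3 ∧ C.sal y = 2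
  have step : ∀ x y z : Fin 3, x ≠ y →
      (∀ s : Finset (Fin 3), s.card = 2 → x ∉ s → s = {y, z}) → (P x y ∨ P y z) := by
    intro x y z hxy hu
    by_cases h : W17 x y ∈ K
    · exact Or.inl ⟨W17 x y, h, rfl, by simp [W17], by simp [W17, Ne.symm hxy]⟩
    · obtain ⟨C', hC'K, hd⟩ := hext _ (W17_feas hxy) h
      obtain ⟨hm, hy, hz⟩ := key_dom hu rfl (by simp [W17]) (by simp [W17, Ne.symm hxy]) hd
      exact Or.inr ⟨C', hC'K, hm, hy, hz⟩
  have nb : ∀ x y z : Fin 3, x ≠ y → x ≠ z → y ≠ z → ¬ (P x y ∧ P y z) := by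
    rintro x y z hxy hxz hyz ⟨⟨C, hCK, hCm, hCx, hCy⟩, ⟨C', hC'K, hC'm, hC'y, hC'z⟩⟩
    exact hint C hCK C' hC'K
      (key_dom' hxy hxz hyz hCm hCy hC'm hC'y hC'z (hfeas C' hC'K))
  have s1 := step 0 1 2 (by decide) (two_set_eq (by decide) (by decide))
  have s2 := step 1 2 0 (by decide) (two_set_eq (by decide) (by decide))
  have s3 := step 2 0 1 (by decide) (two_set_eq (by decide) (by decide))
  have n1 := nb 0 1 2 (by decide) (by decide) (by decide)
  have n2 := nb 1 2 0 (by decide) (by decide) (by decide)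
  have n3 := nb 2 0 1 (by decide) (by decide) (by decide)
  rcases s1 with p | p
  · rcases s2 with q | q
    · exact n1 ⟨p, q⟩
    · exact n3 ⟨q, p⟩
  · rcases s3 with q | q
    · exact n2 ⟨p, q⟩
    · exact n1 ⟨q, p⟩
end

section
/- In the project salary model, if the values s_i* for i in the cheapest feasible coalition N* are maximal solutions of the system: (1) ∑_{i∈N*} s_i ≤ v; (2) for every feasible agent set A ≠ N* with N* ≺ A: ∑_{i∈N*∖A} s_i ≤ ∑_{i∈A∖N*} m_i; (3) for every feasible agent set A ≠ N* with A ≺ N*: ∑_{i∈N*∖A} s_i < ∑_{i∈A∖N*} m_i; then the profile where agents in N* ask s_i* and all other agents ask their minimal salaries m_i is a Strong Nash Equilibrium of the centralized game, and all agents of N* receive positive payoffs. -/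
open Classical Finset

/-- Constructive part of the SNE existence theorem in the centralized project salary model:
if `Nstar` is the agent set of the cheapest feasible coalition (the winner under the
minimal-salary profile) and `sstar` is a maximal solution of the constraint system
(1) ∑_{i∈N*} s_i ≤ v,
(2) ∑_{i∈N*∖A} s_i ≤ ∑_{i∈A∖N*} m_i for every feasible agent set A ≠ N* with N* ≺ A,
(3) ∑_{i∈N*∖A} s_i < ∑_{i∈A∖N*} m_i for every feasible agent set A ≠ N* with A ≺ N*,
then the profile in which agents of `Nstar` ask `sstar` and all others ask their minimal
salaries is a Strong Nash Equilibrium in which all agents of `Nstar` get positive payoffs. -/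
theorem stmt19
    {α : Type} [Fintype α] [DecidableEq α]
    (m : α → ℕ) (hm : ∀ i, 0 < m i) (v : ℕ)
    (F : Finset α → Prop)
    (prec : Finset α → Finset α → Prop)
    (hprec : IsStrictTotalOrder (Finset α) prec)
    (winner : (α → ℕ) → Finset α → Prop)
    (hwinner : ∀ s W, winner s W ↔
      (F W ∧ ∑ i ∈ W, s i ≤ v) ∧
      ∀ A, A ≠ W → F A → ∑ i ∈ A, s i ≤ v →
        (∑ i ∈ W, s i < ∑ i ∈ A, s i ∨
         (∑ i ∈ W, s i = ∑ i ∈ A, s i ∧ prec W A)))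
    (payoff : (α → ℕ) → α → ℕ)
    (hpayoff : ∀ s i, payoff s i = if ∃ W, winner s W ∧ i ∈ W then s i else 0)
    (valid : (α → ℕ) → Prop)
    (hvalid : ∀ s, valid s ↔ ∀ i, m i ≤ s i)
    (SNE : (α → ℕ) → Prop)
    (hSNE : ∀ s, SNE s ↔ valid s ∧ ¬ ∃ (D : Finset α) (s' : α → ℕ),
      D.Nonempty ∧ valid s' ∧ (∀ i ∉ D, s' i = s i) ∧
      ∀ i ∈ D, payoff s i < payoff s' i)
    (Nstar : Finset α) (hNstar : winner m Nstar)
    (Sat : (α → ℕ) → Prop)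
    (hSat : ∀ s, Sat s ↔
      (∑ i ∈ Nstar, s i ≤ v) ∧
      (∀ A : Finset α, F A → A ≠ Nstar → prec Nstar A →
        ∑ i ∈ Nstar \ A, s i ≤ ∑ i ∈ A \ Nstar, m i) ∧
      (∀ A : Finset α, F A → A ≠ Nstar → prec A Nstar →
        ∑ i ∈ Nstar \ A, s i < ∑ i ∈ A \ Nstar, m i))
    (sstar : α → ℕ) (hge : ∀ i, m i ≤ sstar i)
    (hsat : Sat sstar)
    (hmax : ∀ i ∈ Nstar, ¬ Sat (Function.update sstar i (sstar i + 1)))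
    (σ : α → ℕ) (hσ : σ = fun i => if i ∈ Nstar then sstar i else m i) :
    SNE σ ∧ ∀ i ∈ Nstar, payoff σ i = sstar i ∧ 0 < payoff σ i := by
  haveI := hprec
  -- sum splitting helper
  have hsplit : ∀ (f : α → ℕ) (A B : Finset α),
      ∑ i ∈ A, f i = ∑ i ∈ A ∩ B, f i + ∑ i ∈ A \ B, f i := by
    intro f A B
    rw [← Finset.sum_union (Finset.disjoint_sdiff_inter A B).symm]
    congr 1
    ext x; simp; tauto
  have hic : ∀ (f : α → ℕ) (A B : Finset α),
      ∑ i ∈ A ∩ B, f i = ∑ i ∈ B ∩ A, f i := by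
    intro f A B; rw [inter_comm]
  -- basic facts about σ
  have hσN : ∀ i ∈ Nstar, σ i = sstar i := by intro i hi; simp [hσ, hi]
  have hσm : ∀ i ∉ Nstar, σ i = m i := by intro i hi; simp [hσ, hi]
  obtain ⟨⟨hFN, _⟩, _⟩ := (hwinner m Nstar).1 hNstar
  obtain ⟨hs1, hs2, hs3⟩ := (hSat sstar).1 hsat
  have hσNs : ∑ i ∈ Nstar, σ i = ∑ i ∈ Nstar, sstar i := Finset.sum_congr rfl hσN
  -- asymmetry of prec
  have hasym : ∀ A B : Finset α, prec A B → prec B A → False := by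
    intro A B h1 h2
    exact (irrefl_of prec A) (trans_of prec h1 h2)
  -- uniqueness of the winner
  have huniq : ∀ (s : α → ℕ) (W W' : Finset α), winner s W → winner s W' → W = W' := by
    intro s W W' h1 h2
    by_contra hne
    obtain ⟨⟨hFW, hvW⟩, hb1⟩ := (hwinner s W).1 h1
    obtain ⟨⟨hFW', hvW'⟩, hb2⟩ := (hwinner s W').1 h2
    have c1 := hb1 W' (fun h => hne h.symm) hFW' hvW'
    have c2 := hb2 W hne hFW hvW
    rcases c1 with h | ⟨he, hp⟩ <;> rcases c2 with h' | ⟨he', hp'⟩ <;> try omega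
    exact hasym W W' hp hp'
  -- Nstar wins under σ
  have hwσ : winner σ Nstar := by
    rw [hwinner]
    refine ⟨⟨hFN, by omega⟩, ?_⟩
    intro A hAne hFA _
    have e1 := hsplit σ Nstar A
    have e2 := hsplit σ A Nstar
    have e3 := hic σ Nstar A
    have e4 : ∑ i ∈ Nstar \ A, σ i = ∑ i ∈ Nstar \ A, sstar i :=
      Finset.sum_congr rfl (fun i hi => hσN i (Finset.mem_sdiff.1 hi).1)
    have e5 : ∑ i ∈ A \ Nstar, σ i = ∑ i ∈ A \ Nstar, m i :=
      Finset.sum_congr rfl (fun i hi => hσm i (Finset.mem_sdiff.1 hi).2)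
    rcases trichotomous_of prec Nstar A with hp | he | hp
    · have := hs2 A hFA hAne hp
      have hle : ∑ i ∈ Nstar, σ i ≤ ∑ i ∈ A, σ i := by omega
      rcases hle.lt_or_eq with h | h
      · exact Or.inl h
      · exact Or.inr ⟨h, hp⟩
    · exact absurd he.symm hAne
    · have := hs3 A hFA hAne hp
      exact Or.inl (by omega)
  -- payoff of Nstar members under σ
  have hps : ∀ i ∈ Nstar, payoff σ i = sstar i := by
    intro i hi
    rw [hpayoff]
    rw [if_pos ⟨Nstar, hwσ, hi⟩]
    exact hσN i hi
  refine ⟨?_, fun i hi => ⟨hps i hi, by rw [hps i hi]; exact lt_of_lt_of_le (hm i) (hge i)⟩⟩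
  rw [hSNE]
  constructor
  · rw [hvalid]
    intro i
    by_cases hi : i ∈ Nstar
    · rw [hσN i hi]; exact hge i
    · rw [hσm i hi]
  · rintro ⟨D, s', hDne, hvalid', hfix, hgain⟩
    have hvs' := (hvalid s').1 hvalid'
    -- every deviator's new payoff is positive, hence there is a winner under s'
    obtain ⟨i₀, hi₀D⟩ := hDne
    have hgain₀ := hgain i₀ hi₀D
    have hW'ex : ∃ W, winner s' W ∧ i₀ ∈ W := by
      by_contra h
      rw [hpayoff s' i₀, if_neg h] at hgain₀
      omega
    obtain ⟨W', hwW', hi₀W'⟩ := hW'ex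
    -- all deviators belong to W' and gain their asked salary
    have hDW' : ∀ i ∈ D, i ∈ W' := by
      intro i hiD
      have hg := hgain i hiD
      have : ∃ W, winner s' W ∧ i ∈ W := by
        by_contra h
        rw [hpayoff s' i, if_neg h] at hg
        omega
      obtain ⟨W, hwW, hiW⟩ := this
      rwa [huniq s' W W' hwW hwW'] at hiW
    have hpay' : ∀ i, payoff s' i = if i ∈ W' then s' i else 0 := by
      intro i
      rw [hpayoff]
      by_cases hi : i ∈ W'
      · rw [if_pos ⟨W', hwW', hi⟩, if_pos hi]
      · rw [if_neg hi, if_neg]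
        rintro ⟨W, hwW, hiW⟩
        rw [huniq s' W W' hwW hwW'] at hiW
        exact hi hiW
    -- deviators in Nstar strictly raised their ask
    have hstrict : ∀ i ∈ D, i ∈ Nstar → sstar i + 1 ≤ s' i := by
      intro i hiD hiN
      have hg := hgain i hiD
      rw [hps i hiN, hpay', if_pos (hDW' i hiD)] at hg
      omega
    obtain ⟨⟨hFW', hvW'⟩, hbW'⟩ := (hwinner s' W').1 hwW'
    by_cases hWN : W' = Nstar
    · -- Case W' = Nstar : contradict maximality
      rw [hWN] at hvW' hbW'
      have hDN : ∀ i ∈ D, i ∈ Nstar := by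
        intro i h; rw [← hWN]; exact hDW' i h
      have hi₀N : i₀ ∈ Nstar := hDN i₀ hi₀D
      -- s' equals m off Nstar
      have hoff : ∀ i ∉ Nstar, s' i = m i := by
        intro i hi
        have hiD : i ∉ D := fun h => hi (hDN i h)
        rw [hfix i hiD, hσm i hi]
      -- Sat holds for s'
      have c2 : ∀ A : Finset α, F A → A ≠ Nstar → prec Nstar A →
          ∑ i ∈ Nstar \ A, s' i ≤ ∑ i ∈ A \ Nstar, m i := by
        intro A hFA hAne hp
        have e1 := hsplit s' Nstar A
        have e2 := hsplit s' A Nstar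
        have e3 := hic s' Nstar A
        have e5 : ∑ i ∈ A \ Nstar, s' i = ∑ i ∈ A \ Nstar, m i :=
          Finset.sum_congr rfl (fun i hi => hoff i (Finset.mem_sdiff.1 hi).2)
        by_cases hAv : ∑ i ∈ A, s' i ≤ v
        · rcases hbW' A hAne hFA hAv with h | ⟨he, _⟩ <;> omega
        · omega
      have c3 : ∀ A : Finset α, F A → A ≠ Nstar → prec A Nstar →
          ∑ i ∈ Nstar \ A, s' i < ∑ i ∈ A \ Nstar, m i := by
        intro A hFA hAne hp
        have e1 := hsplit s' Nstar A
        have e2 := hsplit s' A Nstar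
        have e3 := hic s' Nstar A
        have e5 : ∑ i ∈ A \ Nstar, s' i = ∑ i ∈ A \ Nstar, m i :=
          Finset.sum_congr rfl (fun i hi => hoff i (Finset.mem_sdiff.1 hi).2)
        by_cases hAv : ∑ i ∈ A, s' i ≤ v
        · rcases hbW' A hAne hFA hAv with h | ⟨he, hpr⟩
          · omega
          · exact absurd hpr (fun hpr => hasym A Nstar hp hpr)
        · omega
      -- the updated profile t is still in Sat: contradiction with hmax
      set t := Function.update sstar i₀ (sstar i₀ + 1) with ht
      have htle : ∀ i ∈ Nstar, t i ≤ s' i := by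
        intro i hiN
        by_cases hii : i = i₀
        · subst hii
          rw [ht, Function.update_self]
          exact hstrict i hi₀D hiN
        · rw [ht, Function.update_of_ne hii]
          by_cases hiD : i ∈ D
          · have := hstrict i hiD hiN; omega
          · rw [hfix i hiD, hσN i hiN]
      refine hmax i₀ hi₀N ((hSat t).2 ⟨?_, ?_, ?_⟩)
      · calc ∑ i ∈ Nstar, t i ≤ ∑ i ∈ Nstar, s' i := Finset.sum_le_sum htle
          _ ≤ v := hvW'
      · intro A hFA hAne hp
        calc ∑ i ∈ Nstar \ A, t i ≤ ∑ i ∈ Nstar \ A, s' i :=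
              Finset.sum_le_sum (fun i hi => htle i (Finset.mem_sdiff.1 hi).1)
          _ ≤ ∑ i ∈ A \ Nstar, m i := c2 A hFA hAne hp
      · intro A hFA hAne hp
        calc ∑ i ∈ Nstar \ A, t i ≤ ∑ i ∈ Nstar \ A, s' i :=
              Finset.sum_le_sum (fun i hi => htle i (Finset.mem_sdiff.1 hi).1)
          _ < ∑ i ∈ A \ Nstar, m i := c3 A hFA hAne hp
    · -- Case W' ≠ Nstar : contradiction with winner condition for W'
      -- on Nstar \ W', s' coincides with sstar
      have hNsW : ∑ i ∈ Nstar \ W', s' i = ∑ i ∈ Nstar \ W', sstar i := by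
        refine Finset.sum_congr rfl (fun i hi => ?_)
        obtain ⟨hiN, hiW⟩ := Finset.mem_sdiff.1 hi
        have hiD : i ∉ D := fun h => hiW (hDW' i h)
        rw [hfix i hiD, hσN i hiN]
      have hmle : ∑ i ∈ W' \ Nstar, m i ≤ ∑ i ∈ W' \ Nstar, s' i :=
        Finset.sum_le_sum (fun i _ => hvs' i)
      have e1 := hsplit s' Nstar W'
      have e2 := hsplit s' W' Nstar
      have e3 := hic s' Nstar W'
      rcases trichotomous_of prec Nstar W' with hp | he | hp
      · have hkey := hs2 W' hFW' hWN hp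
        have hNle : ∑ i ∈ Nstar, s' i ≤ ∑ i ∈ W', s' i := by omega
        rcases hbW' Nstar (fun h => hWN h.symm) hFN (by omega) with h | ⟨he, hpr⟩
        · omega
        · exact hasym Nstar W' hp hpr
      · exact hWN he.symm
      · have hkey := hs3 W' hFW' hWN hp
        have hNlt : ∑ i ∈ Nstar, s' i < ∑ i ∈ W', s' i := by omega
        rcases hbW' Nstar (fun h => hWN h.symm) hFN (by omega) with h | ⟨he, _⟩ <;> omega
end
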